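/- arXiv:1512.02615 — 5 statements merged into one kernel-verified Lean document; each statement's English description precedes it below -/
import Mathlib

section
/- For positive definite d×d matrices ρ (with tr ρ = 1) and σ, the two variational quantities sup_{ω > 0} (tr[ρ log ω] − log tr[σ ω]) and sup_{ω > 0} (tr[ρ log ω] + 1 − tr[σ ω]) are equal, where the suprema run over positive definite matrices ω. -/
open Matrix
open scoped ComplexOrder

noncomputable def mlog {d : ℕ} (A : Matrix (Fin d) (Fin d) ℂ) : Matrix (Fin d) (Fin d) ℂ :=
  cfc (R := ℝ) Real.log A

noncomputable def mpow {d : ℕ} (A : Matrix (Fin d) (Fin d) ℂ) (p : ℝ) : Matrix (Fin d) (Fin d) ℂ :=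
  cfc (R := ℝ) (fun t : ℝ => t ^ p) A

noncomputable def mexp {d : ℕ} (A : Matrix (Fin d) (Fin d) ℂ) : Matrix (Fin d) (Fin d) ℂ :=
  NormedSpace.exp A

/-- Kullback-Leibler divergence with the convention that terms with `P x = 0` contribute `0`. -/
noncomputable def KL {X : Type*} [Fintype X] (P Q : X → ℝ) : ℝ :=
  ∑ x, if P x = 0 then 0 else P x * Real.log (P x / Q x)

/-- A rank-one projective measurement: mutually orthogonal rank-1 projectors summing to 1. -/
def IsRankOneProjMeas {d : ℕ} (P : Fin d → Matrix (Fin d) (Fin d) ℂ) : Prop :=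
  (∀ i, (P i).IsHermitian) ∧ (∀ i j, P i * P j = if i = j then P i else 0) ∧
    (∑ i, P i = 1) ∧ (∀ i, (P i).rank = 1)

section AuxLemmas

variable {d : ℕ}

lemma aux_spectrum_subset_Ioi {ω : Matrix (Fin d) (Fin d) ℂ} (hω : ω.PosDef) :
    spectrum ℝ ω ⊆ Set.Ioi (0:ℝ) := by
  rw [hω.isHermitian.spectrum_real_eq_range_eigenvalues]
  rintro x ⟨i, rfl⟩
  exact hω.eigenvalues_pos i

lemma aux_real_smul_eq (c : ℝ) (ω : Matrix (Fin d) (Fin d) ℂ) : c • ω = (c : ℂ) • ω := by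
  ext i j; simp [Complex.real_smul]

lemma aux_posDef_real_smul {ω : Matrix (Fin d) (Fin d) ℂ} (hω : ω.PosDef) {c : ℝ} (hc : 0 < c) :
    (c • ω).PosDef := by
  rw [aux_real_smul_eq, posDef_iff_dotProduct_mulVec]
  refine ⟨?_, fun x hx => ?_⟩
  · unfold Matrix.IsHermitian
    rw [conjTranspose_smul, hω.1.eq]
    congr 1
    simp [Complex.star_def, Complex.conj_ofReal]
  · rw [smul_mulVec, dotProduct_smul, smul_eq_mul]
    exact mul_pos (by exact_mod_cast hc) (hω.dotProduct_mulVec_pos hx)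

lemma aux_mlog_real_smul {ω : Matrix (Fin d) (Fin d) ℂ} (hω : ω.PosDef) {c : ℝ} (hc : 0 < c) :
    mlog (c • ω) = Real.log c • (1 : Matrix (Fin d) (Fin d) ℂ) + mlog ω := by
  have hsa : IsSelfAdjoint ω := hω.1
  have hspec := aux_spectrum_subset_Ioi hω
  have hcont : ContinuousOn Real.log ((c • ·) '' (spectrum ℝ ω)) := by
    apply Real.continuousOn_log.mono
    rintro x ⟨y, hy, rfl⟩
    simpa [smul_eq_mul] using (mul_pos hc (hspec hy)).ne'
  have hlog : ContinuousOn Real.log (spectrum ℝ ω) :=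
    Real.continuousOn_log.mono (fun x hx => by simpa using (hspec hx).ne')
  unfold mlog
  rw [← cfc_comp_smul c Real.log ω hcont hsa,
    cfc_congr (fun t ht => by
      simpa [smul_eq_mul] using Real.log_mul hc.ne' (hspec ht).ne' :
      (spectrum ℝ ω).EqOn (Real.log <| c • ·) (fun t => Real.log c + Real.log t)),
    cfc_const_add _ _ _ hlog hsa, Algebra.algebraMap_eq_smul_one]

lemma aux_trace_re_pos [NeZero d] {M : Matrix (Fin d) (Fin d) ℂ} (hM : M.PosDef) :
    0 < M.trace.re := by
  have h : ∀ i, 0 < (M i i).re := by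
    intro i
    have := hM.re_dotProduct_pos (x := Pi.single i 1) (by
      simp [Function.ne_iff])
    simpa [dotProduct, Pi.single_apply, apply_ite] using this
  have : M.trace.re = ∑ i, (M i i).re := by
    simp [Matrix.trace, Matrix.diag, Complex.re_sum]
  rw [this]
  exact Finset.sum_pos (fun i _ => h i) Finset.univ_nonempty

lemma aux_posDef_conj {A B : Matrix (Fin d) (Fin d) ℂ} (hA : A.PosDef) (hB : IsUnit B) :
    (Bᴴ * A * B).PosDef := by
  rw [posDef_iff_dotProduct_mulVec]
  refine ⟨(hA.posSemidef.conjTranspose_mul_mul_same B).1, fun x hx => ?_⟩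
  have hBx : B *ᵥ x ≠ 0 :=
    (Matrix.mulVec_injective_iff_isUnit.mpr hB).ne_iff' (by simp) |>.2 hx
  have key : star x ⬝ᵥ (Bᴴ * A * B) *ᵥ x = star (B *ᵥ x) ⬝ᵥ A *ᵥ (B *ᵥ x) := by
    rw [← Matrix.mulVec_mulVec, dotProduct_mulVec, ← Matrix.vecMul_vecMul,
      ← star_mulVec, ← dotProduct_mulVec]
  exact key ▸ hA.dotProduct_mulVec_pos hBx

lemma aux_trace_mul_re_pos [NeZero d] {A B : Matrix (Fin d) (Fin d) ℂ}
    (hA : A.PosDef) (hB : B.PosDef) : 0 < ((A * B).trace).re := by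
  open scoped MatrixOrder in set S := CFC.sqrt B with hSdef
  open scoped MatrixOrder in have hS : S.PosSemidef := (CFC.sqrt_nonneg B).posSemidef
  open scoped MatrixOrder in have hSS : S * S = B := CFC.sqrt_mul_sqrt_self B hB.posSemidef.nonneg
  have hdetS : IsUnit S := by
    have : S.det * S.det = B.det := by rw [← det_mul, hSS]
    have hB0 : B.det ≠ 0 := hB.det_pos.ne'
    exact isUnit_iff_isUnit_det _ |>.2
      (IsUnit.mk0 _ (fun h => hB0 (by rw [← this, h, zero_mul])) : IsUnit S.det)
  have key : (A * B).trace = (Sᴴ * A * S).trace := by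
    rw [← hSS, hS.1, ← Matrix.mul_assoc, Matrix.trace_mul_cycle]
  rw [key]
  exact aux_trace_re_pos (aux_posDef_conj hA hdetS)

end AuxLemmas

/-- The two variational quantities for the measured relative entropy agree. -/
theorem measured_relEntropy_variational_eq {d : ℕ}
    (ρ σ : Matrix (Fin d) (Fin d) ℂ) (hρ : ρ.PosDef) (hσ : σ.PosDef)
    (hρ1 : ρ.trace = 1) :
    (⨆ ω : {ω : Matrix (Fin d) (Fin d) ℂ // ω.PosDef},
        ((ρ * mlog ω.1).trace.re - Real.log ((σ * ω.1).trace.re)))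
      = ⨆ ω : {ω : Matrix (Fin d) (Fin d) ℂ // ω.PosDef},
        ((ρ * mlog ω.1).trace.re + 1 - (σ * ω.1).trace.re) := by
  have hd : d ≠ 0 := by
    rintro rfl
    rw [Matrix.trace] at hρ1
    simp at hρ1
  haveI : NeZero d := ⟨hd⟩
  have key : ∀ ω : Matrix (Fin d) (Fin d) ℂ, ω.PosDef →
      ∃ ω' : {ω : Matrix (Fin d) (Fin d) ℂ // ω.PosDef},
        ((ρ * mlog ω'.1).trace.re + 1 - (σ * ω'.1).trace.re
          = (ρ * mlog ω).trace.re - Real.log ((σ * ω).trace.re)) := by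
    intro ω hω
    set t := ((σ * ω).trace).re with htdef
    have ht : 0 < t := aux_trace_mul_re_pos hσ hω
    refine ⟨⟨t⁻¹ • ω, aux_posDef_real_smul hω (inv_pos.mpr ht)⟩, ?_⟩
    have h1 : (ρ * mlog (t⁻¹ • ω)).trace.re
        = Real.log t⁻¹ + (ρ * mlog ω).trace.re := by
      rw [aux_mlog_real_smul hω (inv_pos.mpr ht), mul_add, Matrix.mul_smul, mul_one,
        trace_add, trace_smul, hρ1]
      simp
    have h2 : ((σ * (t⁻¹ • ω)).trace).re = t⁻¹ * t := by
      rw [Matrix.mul_smul, trace_smul]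
      simp only [Complex.real_smul, Complex.mul_re, Complex.ofReal_re, Complex.ofReal_im,
        zero_mul, sub_zero]
      rfl
    simp only [h1, h2, inv_mul_cancel₀ ht.ne', Real.log_inv]
    ring
  rw [← sSup_range, ← sSup_range]
  apply csSup_eq_csSup_of_forall_exists_le
  · rintro x ⟨ω, rfl⟩
    obtain ⟨ω', heq⟩ := key ω.1 ω.2
    exact ⟨_, ⟨ω', rfl⟩, heq.ge⟩
  · rintro y ⟨ω, rfl⟩
    refine ⟨_, ⟨ω, rfl⟩, ?_⟩
    have ht := aux_trace_mul_re_pos hσ ω.2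
    have := Real.log_le_sub_one_of_pos ht
    dsimp only
    linarith
end

section
/- For a density matrix ρ > 0 and positive definite σ, the projectively measured relative entropy sup over orthogonal rank-1 projective measurements {P_i} of Σ_i tr[P_i ρ] log(tr[P_i ρ]/tr[P_i σ]) equals sup_{ω > 0} tr[ρ log ω] + 1 − tr[σ ω], and the supremum over ω is attained. -/
open Matrix
open scoped ComplexOrder

section Aux
variable {d : ℕ}

lemma posSemidef_of_proj {P : Matrix (Fin d) (Fin d) ℂ} (hH : P.IsHermitian) (hI : P * P = P) :
    P.PosSemidef := by
  have h : P = Pᴴ * P := by rw [hH]; exact hI.symm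
  rw [h]
  exact posSemidef_conjTranspose_mul_self P

lemma diag_conj_entry (s B : Matrix (Fin d) (Fin d) ℂ) (i : Fin d) :
    (s * B * sᴴ) i i = dotProduct (star (star (s i))) (B *ᵥ (star (s i))) := by
  simp only [mul_apply, conjTranspose_apply, mulVec, dotProduct, star_star, Pi.star_apply,
    Finset.sum_mul, Finset.mul_sum]
  rw [Finset.sum_comm]
  exact Finset.sum_congr rfl fun j _ => Finset.sum_congr rfl fun k _ => by ring

open scoped MatrixOrder in
lemma trace_mul_pos_of_posSemidef {P B : Matrix (Fin d) (Fin d) ℂ} (hP : P.PosSemidef)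
    (hP0 : P ≠ 0) (hB : B.PosDef) : 0 < (P * B).trace.re := by
  set s := CFC.sqrt P with hs
  have hss : s * s = P := CFC.sqrt_mul_sqrt_self P hP.nonneg
  have hsh : sᴴ = s := (CFC.sqrt_nonneg P).posSemidef.1
  have hs0 : s ≠ 0 := by
    intro h0
    apply hP0
    rw [← hss, h0, mul_zero]
  have h1 : (P * B).trace = (s * B * sᴴ).trace := by
    rw [hsh, ← hss, Matrix.mul_assoc, Matrix.trace_mul_comm s (s * B), Matrix.mul_assoc]
  rw [h1, Matrix.trace]
  have hre : ∀ i, ((s * B * sᴴ).diag i).re =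
      (dotProduct (star (star (s i))) (B *ᵥ (star (s i)))).re := fun i => by
    rw [Matrix.diag_apply, diag_conj_entry]
  rw [Complex.re_sum]
  refine Finset.sum_pos' (fun i _ => ?_) ?_
  · rw [hre]
    have := (Complex.le_def.mp (hB.posSemidef.dotProduct_mulVec_nonneg (star (s i)))).1
    simpa using this
  · obtain ⟨i, j, hij⟩ : ∃ i j, s i j ≠ 0 := by
      by_contra hc
      push_neg at hc
      exact hs0 (by ext i j; exact hc i j)
    refine ⟨i, Finset.mem_univ i, ?_⟩
    rw [hre]
    have hrow : star (s i) ≠ 0 := by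
      intro h0
      apply hij
      have := congrFun h0 j
      simpa using this
    have := (Complex.lt_def.mp (hB.dotProduct_mulVec_pos hrow)).1
    simpa using this

lemma trace_eq_rank_of_proj {P : Matrix (Fin d) (Fin d) ℂ} (hH : P.IsHermitian) (hI : P * P = P) :
    P.trace = (P.rank : ℂ) := by
  classical
  set U : Matrix (Fin d) (Fin d) ℂ := (hH.eigenvectorUnitary : Matrix (Fin d) (Fin d) ℂ) with hUdef
  have hU : U * star U = 1 := (Matrix.mem_unitaryGroup_iff).mp hH.eigenvectorUnitary.2
  have hU' : star U * U = 1 := (Matrix.mem_unitaryGroup_iff').mp hH.eigenvectorUnitary.2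
  set D : Matrix (Fin d) (Fin d) ℂ := diagonal (RCLike.ofReal ∘ hH.eigenvalues) with hDdef
  have hspec : P = U * D * star U := hH.spectral_theorem
  have htr : P.trace = D.trace := by
    rw [hspec, Matrix.trace_mul_comm (U * D) (star U), ← Matrix.mul_assoc, hU', Matrix.one_mul]
  have hDD : D * D = D := by
    have h := hI
    rw [hspec] at h
    have h2 := congrArg (fun X => star U * X * U) h
    simp only [Matrix.mul_assoc] at h2
    rw [← Matrix.mul_assoc U D, ← Matrix.mul_assoc U D] at h2
    simp only [hU'] at h2
    rw [Matrix.mul_one] at h2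
    simp only [← Matrix.mul_assoc] at h2
    rw [hU'] at h2
    simp only [Matrix.one_mul] at h2
    rw [Matrix.mul_assoc D (star U) U, hU', Matrix.mul_one] at h2
    exact h2
  have hdich : ∀ i, hH.eigenvalues i = 0 ∨ hH.eigenvalues i = 1 := by
    intro i
    have h3 : (hH.eigenvalues i : ℂ) * (hH.eigenvalues i : ℂ) = (hH.eigenvalues i : ℂ) := by
      have := congrFun (congrFun hDD i) i
      simpa [hDdef, Matrix.diagonal_mul_diagonal, Matrix.diagonal_apply_eq] using this
    have h4 : hH.eigenvalues i * hH.eigenvalues i = hH.eigenvalues i := by exact_mod_cast h3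
    rcases mul_eq_zero.mp (show hH.eigenvalues i * (hH.eigenvalues i - 1) = 0 by nlinarith) with h | h
    · exact Or.inl h
    · exact Or.inr (by linarith)
  have hrank : P.rank = Fintype.card {i // hH.eigenvalues i ≠ 0} := hH.rank_eq_card_non_zero_eigs
  have htrD : D.trace = ((Finset.univ.filter fun i => hH.eigenvalues i ≠ 0).card : ℂ) := by
    rw [hDdef, Matrix.trace_diagonal]
    rw [← Finset.sum_boole]
    refine Finset.sum_congr rfl fun i _ => ?_
    rcases hdich i with h | h <;> simp [h]
  rw [htr, htrD, hrank, Fintype.card_subtype]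

lemma cfc_sum_smul_proj (P : Fin d → Matrix (Fin d) (Fin d) ℂ) (c : Fin d → ℝ)
    (hherm : ∀ i, (P i).IsHermitian)
    (horth : ∀ i j, P i * P j = if i = j then P i else 0)
    (hsum : ∑ i, P i = 1) (hne : ∀ i, P i ≠ 0) (f : ℝ → ℝ) :
    cfc (R := ℝ) f (∑ i, (c i : ℂ) • P i) = ∑ i, ((f (c i) : ℝ) : ℂ) • P i := by
  set A : Matrix (Fin d) (Fin d) ℂ := ∑ i, (c i : ℂ) • P i with hA
  have hAsa : IsSelfAdjoint A := by
    rw [_root_.IsSelfAdjoint, hA]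
    simp only [star_sum, star_smul, Matrix.star_eq_conjTranspose]
    refine Finset.sum_congr rfl fun i _ => ?_
    rw [hherm i, Complex.star_def, Complex.conj_ofReal]
  have hmem : ∀ i, c i ∈ spectrum ℝ A := by
    intro i
    rw [spectrum.mem_iff]
    intro hunit
    apply hne i
    have hkill : (algebraMap ℝ (Matrix (Fin d) (Fin d) ℂ) (c i) - A) * P i = 0 := by
      rw [sub_mul, hA, Finset.sum_mul]
      have h1 : ∑ j, ((c j : ℂ) • P j) * P i = (c i : ℂ) • P i := by
        rw [Finset.sum_eq_single i]
        · rw [smul_mul_assoc, horth i i, if_pos rfl]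
        · intro j _ hj
          rw [smul_mul_assoc, horth j i, if_neg hj, smul_zero]
        · simp
      rw [h1]
      have h2 : algebraMap ℝ (Matrix (Fin d) (Fin d) ℂ) (c i) * P i = (c i : ℂ) • P i := by
        rw [Algebra.algebraMap_eq_smul_one, smul_mul_assoc, one_mul]
        norm_num
      rw [h2, sub_self]
    obtain ⟨u, hu⟩ := hunit
    calc P i = 1 * P i := (one_mul _).symm
      _ = (↑u⁻¹ * ↑u) * P i := by rw [u.inv_mul]
      _ = ↑u⁻¹ * (↑u * P i) := by rw [mul_assoc]
      _ = 0 := by rw [hu, hkill, mul_zero]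
  let φ : C(spectrum ℝ A, ℝ) →⋆ₐ[ℝ] Matrix (Fin d) (Fin d) ℂ :=
  { toFun := fun g => ∑ i, ((g ⟨c i, hmem i⟩ : ℝ) : ℂ) • P i
    map_one' := by
      simp only [ContinuousMap.one_apply, Complex.ofReal_one, one_smul]
      exact hsum
    map_mul' := fun g h => by
      rw [Finset.sum_mul_sum]
      refine Finset.sum_congr rfl fun i _ => ?_
      rw [Finset.sum_eq_single i]
      · rw [smul_mul_assoc, mul_smul_comm, horth i i, if_pos rfl, smul_smul,
          ContinuousMap.mul_apply, Complex.ofReal_mul]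
      · intro j _ hj
        rw [smul_mul_assoc, mul_smul_comm, horth i j, if_neg (Ne.symm hj), smul_zero, smul_zero]
      · simp
    map_zero' := by simp
    map_add' := fun g h => by
      simp only [ContinuousMap.add_apply, Complex.ofReal_add, add_smul]
      rw [Finset.sum_add_distrib]
    commutes' := fun r => by
      have he : ∀ y, (algebraMap ℝ C(spectrum ℝ A, ℝ) r) y = r := fun y => by
        rw [Algebra.algebraMap_eq_smul_one]
        simp
      simp only [he]
      rw [Algebra.algebraMap_eq_smul_one, ← hsum, Finset.smul_sum]
      refine Finset.sum_congr rfl fun i _ => ?_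
      ext k l
      simp [Complex.real_smul]
    map_star' := fun g => by
      simp only [star_sum, star_smul, Matrix.star_eq_conjTranspose, star_trivial]
      refine (Finset.sum_congr rfl fun i _ => ?_).symm
      rw [hherm i, Complex.star_def, Complex.conj_ofReal] }
  have hcoe : ⇑φ = fun g : C(spectrum ℝ A, ℝ) => ∑ i, ((g ⟨c i, hmem i⟩ : ℝ) : ℂ) • P i := rfl
  have hφc : Continuous φ := by
    rw [hcoe]
    apply continuous_finset_sum
    intro i _
    exact (Complex.continuous_ofReal.comp
      (continuous_eval_const (⟨c i, hmem i⟩ : spectrum ℝ A))).smul continuous_const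
  have hφid : φ ((ContinuousMap.id ℝ).restrict (spectrum ℝ A)) = A := by
    rw [show φ ((ContinuousMap.id ℝ).restrict (spectrum ℝ A))
        = ∑ i, ((((ContinuousMap.id ℝ).restrict (spectrum ℝ A)) ⟨c i, hmem i⟩ : ℝ) : ℂ) • P i
      from congrFun hcoe _]
    exact hA.symm
  have hfc : ContinuousOn f (spectrum ℝ A) := by
    rw [continuousOn_iff_continuous_restrict]; fun_prop
  rw [cfc_apply f A hAsa hfc, cfcHom_eq_of_continuous_of_map_id hAsa φ hφc hφid, congrFun hcoe _]
  rfl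



lemma rank_one_iff_trace_one {P : Matrix (Fin d) (Fin d) ℂ} (hH : P.IsHermitian)
    (hI : P * P = P) : P.rank = 1 ↔ P.trace = 1 := by
  rw [trace_eq_rank_of_proj hH hI]
  exact_mod_cast (Nat.cast_inj (R := ℂ)).symm.trans (by norm_num)

lemma single_mul_single (i j : Fin d) :
    (Pi.single i 1 : Fin d → ℂ) * Pi.single j 1 = if i = j then Pi.single i 1 else 0 := by
  funext k
  by_cases h : i = j
  · subst h
    by_cases hk : k = i <;> simp [Pi.single_apply, hk]
  · by_cases hk : k = i <;> by_cases hk' : k = j <;>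
      simp [Pi.single_apply, hk, hk', h] <;> simp_all

lemma sum_single_diagonal : ∑ i : Fin d, diagonal (Pi.single i 1 : Fin d → ℂ) = 1 := by
  ext k l
  by_cases h : k = l <;>
    simp [Matrix.sum_apply, diagonal_apply, Pi.single_apply, h, Matrix.one_apply]

lemma isRankOneProjMeas_conj {U : Matrix (Fin d) (Fin d) ℂ}
    (hU : U ∈ Matrix.unitaryGroup (Fin d) ℂ) :
    IsRankOneProjMeas (fun i => U * diagonal (Pi.single i 1) * star U) := by
  have hUU : U * star U = 1 := (Matrix.mem_unitaryGroup_iff).mp hU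
  have hU'U : star U * U = 1 := (Matrix.mem_unitaryGroup_iff').mp hU
  have hprod : ∀ i j, (U * diagonal (Pi.single i 1) * star U) *
      (U * diagonal (Pi.single j 1) * star U)
      = if i = j then U * diagonal (Pi.single i 1) * star U else 0 := by
    intro i j
    calc (U * diagonal (Pi.single i 1) * star U) * (U * diagonal (Pi.single j 1) * star U)
        = U * (diagonal (Pi.single i 1) * (star U * U) * diagonal (Pi.single j 1)) * star U := by
          simp only [Matrix.mul_assoc]
      _ = U * (diagonal ((Pi.single i 1 : Fin d → ℂ) * Pi.single j 1)) * star U := by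
          rw [hU'U, Matrix.mul_one, diagonal_mul_diagonal]
          rfl
      _ = if i = j then U * diagonal (Pi.single i 1) * star U else 0 := by
          rw [single_mul_single]
          by_cases h : i = j
          · simp [h]
          · rw [if_neg h, if_neg h,
              show Matrix.diagonal (0 : Fin d → ℂ) = 0 from Matrix.diagonal_zero,
              Matrix.mul_zero, Matrix.zero_mul]
  have hherm : ∀ i, (U * diagonal (Pi.single i 1) * star U).IsHermitian := by
    intro i
    have : (diagonal (Pi.single i 1 : Fin d → ℂ)).IsHermitian := by
      apply isHermitian_diagonal_of_self_adjoint
      funext k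
      by_cases hk : k = i <;> simp [Pi.single_apply, hk]
    rw [Matrix.IsHermitian, Matrix.star_eq_conjTranspose, conjTranspose_mul, conjTranspose_mul,
      this.eq]
    simp [Matrix.mul_assoc, Matrix.star_eq_conjTranspose]
  have htrace : ∀ i, (U * diagonal (Pi.single i 1) * star U).trace = 1 := by
    intro i
    rw [Matrix.trace_mul_comm (U * diagonal (Pi.single i 1)) (star U), ← Matrix.mul_assoc,
      hU'U, Matrix.one_mul, Matrix.trace_diagonal]
    simp
  refine ⟨hherm, hprod, ?_, ?_⟩
  · calc ∑ i : Fin d, U * diagonal (Pi.single i 1) * star U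
        = U * (∑ i : Fin d, diagonal (Pi.single i 1)) * star U := by
          rw [Finset.mul_sum, Finset.sum_mul]
      _ = 1 := by rw [sum_single_diagonal, Matrix.mul_one, hUU]
  · intro i
    exact (rank_one_iff_trace_one (hherm i) (by rw [hprod i i, if_pos rfl])).mpr (htrace i)

lemma isRankOneProjMeas_iff_trace (P : Fin d → Matrix (Fin d) (Fin d) ℂ) :
    IsRankOneProjMeas P ↔ ((∀ i, (P i).IsHermitian) ∧ (∀ i j, P i * P j = if i = j then P i else 0)
      ∧ (∑ i, P i = 1) ∧ (∀ i, (P i).trace = 1)) := by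
  constructor
  · rintro ⟨h1, h2, h3, h4⟩
    exact ⟨h1, h2, h3, fun i =>
      (rank_one_iff_trace_one (h1 i) (by rw [h2 i i, if_pos rfl])).mp (h4 i)⟩
  · rintro ⟨h1, h2, h3, h4⟩
    exact ⟨h1, h2, h3, fun i =>
      (rank_one_iff_trace_one (h1 i) (by rw [h2 i i, if_pos rfl])).mpr (h4 i)⟩

lemma trace_mul_sum_smul_re (B : Matrix (Fin d) (Fin d) ℂ) (P : Fin d → Matrix (Fin d) (Fin d) ℂ)
    (c : Fin d → ℝ) :
    (B * ∑ i, (c i : ℂ) • P i).trace.re = ∑ i, c i * ((P i) * B).trace.re := by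
  rw [Finset.mul_sum, Matrix.trace_sum, Complex.re_sum]
  refine Finset.sum_congr rfl fun i _ => ?_
  rw [mul_smul_comm, Matrix.trace_smul, Matrix.trace_mul_comm, smul_eq_mul,
    Complex.re_ofReal_mul]

lemma sum_trace_mul_re (P : Fin d → Matrix (Fin d) (Fin d) ℂ) (hsum : ∑ i, P i = 1)
    (B : Matrix (Fin d) (Fin d) ℂ) : ∑ i, ((P i) * B).trace.re = B.trace.re := by
  rw [← Complex.re_sum, ← Matrix.trace_sum, ← Finset.sum_mul, hsum, Matrix.one_mul]

lemma dot_sum_mulVec (s : Finset (Fin d)) (A : Fin d → Matrix (Fin d) (Fin d) ℂ)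
    (x : Fin d → ℂ) :
    dotProduct (star x) ((∑ i ∈ s, A i) *ᵥ x) = ∑ i ∈ s, dotProduct (star x) ((A i) *ᵥ x) := by
  induction s using Finset.induction with
  | empty => simp
  | insert _ _ h ih => rw [Finset.sum_insert h, Finset.sum_insert h, Matrix.add_mulVec,
      dotProduct_add, ih]

lemma posDef_sum_smul (P : Fin d → Matrix (Fin d) (Fin d) ℂ)
    (hherm : ∀ i, (P i).IsHermitian) (hpsd : ∀ i, (P i).PosSemidef)
    (hsum : ∑ i, P i = 1) (c : Fin d → ℝ) (hc : ∀ i, 0 < c i) :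
    (∑ i, (c i : ℂ) • P i).PosDef := by
  refine posDef_iff_dotProduct_mulVec.mpr ⟨?_, ?_⟩
  · show (∑ i, (c i : ℂ) • P i)ᴴ = _
    rw [conjTranspose_sum]
    refine Finset.sum_congr rfl fun i _ => ?_
    rw [conjTranspose_smul, hherm i, Complex.star_def, Complex.conj_ofReal]
  · intro x hx
    have hexp : dotProduct (star x) ((∑ i, (c i : ℂ) • P i) *ᵥ x)
        = ∑ i, (c i : ℂ) * dotProduct (star x) ((P i) *ᵥ x) := by
      rw [dot_sum_mulVec]
      refine Finset.sum_congr rfl fun i _ => ?_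
      rw [smul_mulVec, dotProduct_smul, smul_eq_mul]
    rw [hexp]
    have ht : ∀ i, 0 ≤ dotProduct (star x) ((P i) *ᵥ x) := fun i => (hpsd i).dotProduct_mulVec_nonneg x
    have hsum' : ∑ i, dotProduct (star x) ((P i) *ᵥ x) = dotProduct (star x) x := by
      rw [← dot_sum_mulVec, hsum, Matrix.one_mulVec]
    have hpos : 0 < dotProduct (star x) x := Matrix.dotProduct_star_self_pos_iff.mpr hx
    have him : ∀ i, (dotProduct (star x) ((P i) *ᵥ x)).im = 0 :=
      fun i => ((Complex.le_def.mp (ht i)).2).symm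
    have hre : ∀ i, 0 ≤ (dotProduct (star x) ((P i) *ᵥ x)).re :=
      fun i => by simpa using (Complex.le_def.mp (ht i)).1
    have hrepos : ∃ i, 0 < (dotProduct (star x) ((P i) *ᵥ x)).re := by
      by_contra hcon
      push_neg at hcon
      have hz : ∀ i, (dotProduct (star x) ((P i) *ᵥ x)).re = 0 :=
        fun i => le_antisymm (hcon i) (hre i)
      have : (dotProduct (star x) x).re = 0 := by
        rw [← hsum', Complex.re_sum]
        exact Finset.sum_eq_zero fun i _ => hz i
      exact absurd (Complex.lt_def.mp hpos).1 (by simp [this])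
    rw [Complex.lt_def]
    constructor
    · rw [Complex.re_sum]
      simp only [Complex.re_ofReal_mul, Complex.zero_re]
      refine Finset.sum_pos' (fun i _ => mul_nonneg (hc i).le (hre i)) ?_
      obtain ⟨i, hi⟩ := hrepos
      exact ⟨i, Finset.mem_univ i, mul_pos (hc i) hi⟩
    · rw [Complex.im_sum]
      simp only [Complex.zero_im]
      refine (Finset.sum_eq_zero fun i _ => ?_).symm
      rw [Complex.mul_im]
      simp [him i]

lemma diagonal_eig_eq_sum {v : Fin d → ℝ} :
    diagonal (RCLike.ofReal ∘ v) = ∑ i, ((v i : ℝ) : ℂ) • diagonal (Pi.single i 1 : Fin d → ℂ) := by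
  ext k l
  rw [Matrix.sum_apply]
  by_cases h : k = l
  · subst h
    rw [diagonal_apply_eq]
    rw [Finset.sum_eq_single k]
    · simp [Pi.single_apply]
    · intro j _ hj
      simp [diagonal_apply_eq, Pi.single_apply, Ne.symm hj]
    · simp
  · rw [diagonal_apply_ne _ h]
    refine (Finset.sum_eq_zero fun j _ => ?_).symm
    simp [diagonal_apply_ne _ h]

lemma posDef_eigen_decomp {ω : Matrix (Fin d) (Fin d) ℂ} (hω : ω.PosDef) :
    ω = ∑ i, ((hω.1.eigenvalues i : ℝ) : ℂ) •
      ((hω.1.eigenvectorUnitary : Matrix (Fin d) (Fin d) ℂ) * diagonal (Pi.single i 1) *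
        star (hω.1.eigenvectorUnitary : Matrix (Fin d) (Fin d) ℂ)) := by
  conv_lhs => rw [hω.1.spectral_theorem, Unitary.conjStarAlgAut_apply]
  rw [diagonal_eig_eq_sum, Finset.mul_sum, Finset.sum_mul]
  refine Finset.sum_congr rfl fun i _ => ?_
  rw [mul_smul_comm, smul_mul_assoc]

lemma psd_diag_re_nonneg {Q : Matrix (Fin d) (Fin d) ℂ} (hQ : Q.PosSemidef) (k : Fin d) :
    0 ≤ (Q k k).re := by
  have h := hQ.dotProduct_mulVec_nonneg (Pi.single k 1)
  have he : dotProduct (star (Pi.single k 1 : Fin d → ℂ)) (Q *ᵥ Pi.single k 1) = Q k k := by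
    rw [Matrix.mulVec_single]
    have : star (Pi.single k 1 : Fin d → ℂ) = Pi.single k 1 := by
      funext m
      by_cases hm : m = k <;> simp [Pi.single_apply, hm]
    rw [this, single_dotProduct]
    simp
  rw [he] at h
  simpa using (Complex.le_def.mp h).1

lemma proj_entry_bound {Q : Matrix (Fin d) (Fin d) ℂ} (hH : Q.IsHermitian) (hI : Q * Q = Q)
    (htr : Q.trace = 1) (k l : Fin d) : Q k l ∈ Metric.closedBall (0 : ℂ) 1 := by
  have hQ : Q.PosSemidef := by
    have h : Q = Qᴴ * Q := by rw [hH]; exact hI.symm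
    rw [h]; exact posSemidef_conjTranspose_mul_self Q
  have hdiag : ∀ m, 0 ≤ (Q m m).re := psd_diag_re_nonneg hQ
  have htr' : ∑ m, (Q m m).re = 1 := by
    have : Q.trace.re = 1 := by rw [htr]; simp
    rwa [Matrix.trace, Complex.re_sum] at this
  have hdle : ∀ m, (Q m m).re ≤ 1 := by
    intro m
    rw [← htr']
    exact Finset.single_le_sum (fun i _ => hdiag i) (Finset.mem_univ m)
  have hsq : Complex.normSq (Q k l) ≤ (Q l l).re := by
    have hcol : ((Qᴴ * Q) l l).re = ∑ m, Complex.normSq (Q m l) := by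
      rw [mul_apply, Complex.re_sum]
      refine Finset.sum_congr rfl fun m _ => ?_
      rw [conjTranspose_apply, Complex.star_def]
      rw [← Complex.normSq_eq_conj_mul_self]
      simp
    have h2 : ((Qᴴ * Q) l l).re = (Q l l).re := by
      rw [show Qᴴ * Q = Q by rw [hH]; exact hI]
    rw [← h2, hcol]
    exact Finset.single_le_sum (f := fun m => Complex.normSq (Q m l))
      (fun m _ => Complex.normSq_nonneg _) (Finset.mem_univ k)
  rw [Metric.mem_closedBall, dist_zero_right]
  have h1 : Complex.normSq (Q k l) ≤ 1 := hsq.trans (hdle l)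
  have h2 : ‖Q k l‖ ^ 2 = Complex.normSq (Q k l) := by
    rw [Complex.sq_norm]
  nlinarith [norm_nonneg (Q k l)]

lemma contOn_sum {X : Type*} [TopologicalSpace X] (s : Finset (Fin d)) (g : Fin d → X → ℝ)
    (K : Set X) (h : ∀ i, ContinuousOn (g i) K) :
    ContinuousOn (fun x => ∑ i ∈ s, g i x) K := by
  induction s using Finset.induction with
  | empty => simpa using continuousOn_const
  | insert _ _ hne ih => simp only [Finset.sum_insert hne]; exact (h _).add ih

def measSet (d : ℕ) : Set (Fin d → Matrix (Fin d) (Fin d) ℂ) :=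
  {P | (∀ i, (P i).IsHermitian) ∧ (∀ i j, P i * P j = if i = j then P i else 0) ∧
    (∑ i, P i = 1) ∧ (∀ i, (P i).trace = 1)}

lemma measSet_isClosed (d : ℕ) : IsClosed (measSet d) := by
  have h1 : IsClosed {P : Fin d → Matrix (Fin d) (Fin d) ℂ | ∀ i, (P i).IsHermitian} := by
    rw [Set.setOf_forall]
    exact isClosed_iInter fun i =>
      isClosed_eq ((continuous_apply i).matrix_conjTranspose) (continuous_apply i)
  have h2 : IsClosed {P : Fin d → Matrix (Fin d) (Fin d) ℂ |
      ∀ i j, P i * P j = if i = j then P i else 0} := by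
    rw [Set.setOf_forall]
    refine isClosed_iInter fun i => ?_
    rw [Set.setOf_forall]
    refine isClosed_iInter fun j => ?_
    refine isClosed_eq ((continuous_apply i).matrix_mul (continuous_apply j)) ?_
    by_cases h : i = j
    · simp only [if_pos h]; exact continuous_apply i
    · simp only [if_neg h]; exact continuous_const
  have h3 : IsClosed {P : Fin d → Matrix (Fin d) (Fin d) ℂ | ∑ i, P i = 1} :=
    isClosed_eq (continuous_finset_sum _ fun i _ => continuous_apply i) continuous_const
  have h4 : IsClosed {P : Fin d → Matrix (Fin d) (Fin d) ℂ | ∀ i, (P i).trace = 1} := by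
    rw [Set.setOf_forall]
    exact isClosed_iInter fun i =>
      isClosed_eq ((continuous_apply i).matrix_trace) continuous_const
  have : measSet d = _ := rfl
  exact ((h1.inter (h2.inter (h3.inter h4))) : _)

lemma measSet_isCompact (d : ℕ) : IsCompact (measSet d) := by
  have hT : IsCompact ((Set.univ.pi fun _ : Fin d =>
      ((Set.univ.pi fun _ : Fin d =>
        ((Set.univ.pi fun _ : Fin d => Metric.closedBall (0 : ℂ) 1) : Set (Fin d → ℂ)))
          : Set (Matrix (Fin d) (Fin d) ℂ))) : Set (Fin d → Matrix (Fin d) (Fin d) ℂ)) :=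
    isCompact_univ_pi fun _ => isCompact_univ_pi fun _ =>
      isCompact_univ_pi fun _ => isCompact_closedBall _ _
  refine hT.of_isClosed_subset (measSet_isClosed d) ?_
  rintro P ⟨hh, ho, _, ht⟩
  intro i _ k _ l _
  exact proj_entry_bound (hh i) (by have := ho i i; rwa [if_pos rfl] at this) (ht i) k l

lemma measSet_nonempty (d : ℕ) : (measSet d).Nonempty := by
  have h := isRankOneProjMeas_conj (U := (1 : Matrix (Fin d) (Fin d) ℂ)) (one_mem _)
  exact ⟨_, (isRankOneProjMeas_iff_trace _).mp h⟩

lemma exists_max_meas (ρ σ : Matrix (Fin d) (Fin d) ℂ) (hρ : ρ.PosDef) (hσ : σ.PosDef) :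
    ∃ P₀ ∈ measSet d, ∀ P ∈ measSet d,
      (∑ i, (P i * ρ).trace.re * Real.log ((P i * ρ).trace.re / (P i * σ).trace.re)) ≤
      (∑ i, (P₀ i * ρ).trace.re * Real.log ((P₀ i * ρ).trace.re / (P₀ i * σ).trace.re)) := by
  have hpos : ∀ (B : Matrix (Fin d) (Fin d) ℂ), B.PosDef → ∀ P ∈ measSet d, ∀ i,
      0 < ((P i * B).trace).re := by
    rintro B hB P ⟨hh, ho, _, ht⟩ i
    refine trace_mul_pos_of_posSemidef (posSemidef_of_proj (hh i) ?_) ?_ hB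
    · have := ho i i; rwa [if_pos rfl] at this
    · intro h0
      have := ht i
      rw [h0] at this
      simp at this
  have hcont : ContinuousOn (fun P : Fin d → Matrix (Fin d) (Fin d) ℂ =>
      ∑ i, (P i * ρ).trace.re * Real.log ((P i * ρ).trace.re / (P i * σ).trace.re))
      (measSet d) := by
    refine contOn_sum Finset.univ _ _ fun i => ?_
    have ha : Continuous (fun P : Fin d → Matrix (Fin d) (Fin d) ℂ => ((P i * ρ).trace).re) :=
      Complex.continuous_re.comp ((continuous_apply i).matrix_mul continuous_const).matrix_trace
    have hb : Continuous (fun P : Fin d → Matrix (Fin d) (Fin d) ℂ => ((P i * σ).trace).re) :=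
      Complex.continuous_re.comp ((continuous_apply i).matrix_mul continuous_const).matrix_trace
    refine ha.continuousOn.mul (ContinuousOn.log ?_ ?_)
    · exact (ha.continuousOn.div hb.continuousOn fun P hP => (hpos σ hσ P hP i).ne')
    · exact fun P hP => (div_pos (hpos ρ hρ P hP i) (hpos σ hσ P hP i)).ne'
  obtain ⟨P₀, hP₀, hmax⟩ := (measSet_isCompact d).exists_isMaxOn (measSet_nonempty d) hcont
  exact ⟨P₀, hP₀, fun P hP => hmax hP⟩

end Aux

/-- Variational expression for the projectively measured relative entropy, with the supremum
over `ω` attained for positive definite states. -/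
theorem projectively_measured_relEntropy_variational {d : ℕ}
    (ρ σ : Matrix (Fin d) (Fin d) ℂ) (hρ : ρ.PosDef) (hσ : σ.PosDef)
    (hρ1 : ρ.trace = 1) :
    (⨆ P : {P : Fin d → Matrix (Fin d) (Fin d) ℂ // IsRankOneProjMeas P},
        ∑ i, (P.1 i * ρ).trace.re *
          Real.log ((P.1 i * ρ).trace.re / (P.1 i * σ).trace.re))
      = (⨆ ω : {ω : Matrix (Fin d) (Fin d) ℂ // ω.PosDef},
          ((ρ * mlog ω.1).trace.re + 1 - (σ * ω.1).trace.re))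
    ∧ ∃ ω : {ω : Matrix (Fin d) (Fin d) ℂ // ω.PosDef},
        ((ρ * mlog ω.1).trace.re + 1 - (σ * ω.1).trace.re)
          = ⨆ ω' : {ω' : Matrix (Fin d) (Fin d) ℂ // ω'.PosDef},
              ((ρ * mlog ω'.1).trace.re + 1 - (σ * ω'.1).trace.re) := by
  classical
  have hρre : ρ.trace.re = 1 := by rw [hρ1]; exact Complex.one_re
  -- positivity of outcome probabilities
  have hposfact : ∀ (P : Fin d → Matrix (Fin d) (Fin d) ℂ), IsRankOneProjMeas P →
      ∀ (B : Matrix (Fin d) (Fin d) ℂ), B.PosDef → ∀ i, 0 < ((P i * B).trace).re := by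
    rintro P ⟨h1, h2, h3, h4⟩ B hB i
    refine trace_mul_pos_of_posSemidef
      (posSemidef_of_proj (h1 i) (by have := h2 i i; rwa [if_pos rfl] at this)) ?_ hB
    intro h0
    have := h4 i
    rw [h0, Matrix.rank_zero] at this
    exact absurd this (by norm_num)
  have hne0 : ∀ (P : Fin d → Matrix (Fin d) (Fin d) ℂ), IsRankOneProjMeas P →
      ∀ i, P i ≠ 0 := by
    rintro P ⟨h1, h2, h3, h4⟩ i h0
    have := h4 i
    rw [h0, Matrix.rank_zero] at this
    exact absurd this (by norm_num)
  have hpsd : ∀ (P : Fin d → Matrix (Fin d) (Fin d) ℂ), IsRankOneProjMeas P →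
      ∀ i, (P i).PosSemidef := by
    rintro P ⟨h1, h2, h3, h4⟩ i
    exact posSemidef_of_proj (h1 i) (by have := h2 i i; rwa [if_pos rfl] at this)
  -- construction A : from a measurement, an ω with equal value
  have hconA : ∀ (P : Fin d → Matrix (Fin d) (Fin d) ℂ) (hP : IsRankOneProjMeas P),
      ∃ ω : {ω : Matrix (Fin d) (Fin d) ℂ // ω.PosDef},
        ((ρ * mlog ω.1).trace.re + 1 - (σ * ω.1).trace.re)
          = ∑ i, (P i * ρ).trace.re * Real.log ((P i * ρ).trace.re / (P i * σ).trace.re) := by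
    intro P hP
    have hp : ∀ i, 0 < ((P i * ρ).trace).re := hposfact P hP ρ hρ
    have hq : ∀ i, 0 < ((P i * σ).trace).re := hposfact P hP σ hσ
    obtain ⟨h1, h2, h3, h4⟩ := hP
    set p : Fin d → ℝ := fun i => ((P i * ρ).trace).re with hpdef
    set q : Fin d → ℝ := fun i => ((P i * σ).trace).re with hqdef
    have hPD : (∑ i, ((p i / q i : ℝ) : ℂ) • P i).PosDef :=
      posDef_sum_smul P h1 (hpsd P ⟨h1, h2, h3, h4⟩) h3 _
        (fun i => div_pos (hp i) (hq i))
    refine ⟨⟨∑ i, ((p i / q i : ℝ) : ℂ) • P i, hPD⟩, ?_⟩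
    have hlog : mlog (∑ i, ((p i / q i : ℝ) : ℂ) • P i)
        = ∑ i, ((Real.log (p i / q i) : ℝ) : ℂ) • P i :=
      cfc_sum_smul_proj P (fun i => p i / q i) h1 h2 h3 (hne0 P ⟨h1, h2, h3, h4⟩) Real.log
    dsimp only
    rw [hlog, trace_mul_sum_smul_re, trace_mul_sum_smul_re]
    have hq1 : ∑ i, (p i / q i) * ((P i * σ).trace).re = 1 := by
      have : ∀ i ∈ Finset.univ, (p i / q i) * ((P i * σ).trace).re = ((P i * ρ).trace).re := by
        intro i _
        rw [show ((P i * σ).trace).re = q i from rfl, div_mul_cancel₀ _ (hq i).ne']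
      rw [Finset.sum_congr rfl this, sum_trace_mul_re P h3 ρ, hρre]
    rw [hq1, add_sub_cancel_right]
    exact Finset.sum_congr rfl fun i _ => mul_comm _ _
  -- construction B : from ω, a measurement with at least its value
  have hconB : ∀ (ω : Matrix (Fin d) (Fin d) ℂ) (hω : ω.PosDef),
      ∃ P : Fin d → Matrix (Fin d) (Fin d) ℂ, IsRankOneProjMeas P ∧
        ((ρ * mlog ω).trace.re + 1 - (σ * ω).trace.re)
          ≤ ∑ i, (P i * ρ).trace.re * Real.log ((P i * ρ).trace.re / (P i * σ).trace.re) := by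
    intro ω hω
    set P : Fin d → Matrix (Fin d) (Fin d) ℂ := fun i =>
      (hω.1.eigenvectorUnitary : Matrix (Fin d) (Fin d) ℂ) * diagonal (Pi.single i 1) *
        star (hω.1.eigenvectorUnitary : Matrix (Fin d) (Fin d) ℂ) with hPdef
    have hPmeas : IsRankOneProjMeas P := isRankOneProjMeas_conj hω.1.eigenvectorUnitary.2
    set w : Fin d → ℝ := hω.1.eigenvalues with hwdef
    have hw : ∀ i, 0 < w i := hω.eigenvalues_pos
    have hdecomp : ω = ∑ i, ((w i : ℝ) : ℂ) • P i := posDef_eigen_decomp hω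
    obtain ⟨h1, h2, h3, h4⟩ := hPmeas
    have hlog : mlog ω = ∑ i, ((Real.log (w i) : ℝ) : ℂ) • P i := by
      rw [hdecomp]
      exact cfc_sum_smul_proj P w h1 h2 h3 (hne0 P ⟨h1, h2, h3, h4⟩) Real.log
    have hp : ∀ i, 0 < ((P i * ρ).trace).re := hposfact P ⟨h1, h2, h3, h4⟩ ρ hρ
    have hq : ∀ i, 0 < ((P i * σ).trace).re := hposfact P ⟨h1, h2, h3, h4⟩ σ hσ
    refine ⟨P, ⟨h1, h2, h3, h4⟩, ?_⟩
    rw [hlog]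
    conv_lhs => rw [hdecomp]
    rw [trace_mul_sum_smul_re, trace_mul_sum_smul_re]
    set p : Fin d → ℝ := fun i => ((P i * ρ).trace).re with hpdef
    set q : Fin d → ℝ := fun i => ((P i * σ).trace).re with hqdef
    have hsp : ∑ i, p i = 1 := by rw [hpdef]; rw [sum_trace_mul_re P h3 ρ, hρre]
    have key : ∀ i ∈ Finset.univ, Real.log (w i) * p i + (p i - w i * q i)
        ≤ p i * Real.log (p i / q i) := by
      intro i _
      have ht : 0 < q i * w i / p i := by
        have := hp i; have := hq i; have := hw i; positivity
      have hlog2 := Real.log_le_sub_one_of_pos ht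
      have h3' : p i * Real.log (q i * w i / p i) ≤ q i * w i - p i := by
        have hm := mul_le_mul_of_nonneg_left hlog2 (hp i).le
        calc p i * Real.log (q i * w i / p i) ≤ p i * (q i * w i / p i - 1) := hm
          _ = q i * w i - p i := by
            rw [mul_sub, mul_one, ← mul_div_assoc, mul_comm, mul_div_assoc,
              div_self (hp i).ne', mul_one]
      have hexpand : Real.log (q i * w i / p i)
          = Real.log (q i) + Real.log (w i) - Real.log (p i) := by
        rw [Real.log_div (mul_pos (hq i) (hw i)).ne' (hp i).ne', Real.log_mul (hq i).ne' (hw i).ne']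
      have hpq : Real.log (p i / q i) = Real.log (p i) - Real.log (q i) :=
        Real.log_div (hp i).ne' (hq i).ne'
      rw [hexpand] at h3'
      rw [hpq]
      nlinarith [h3']
    calc (∑ i, Real.log (w i) * p i) + 1 - ∑ i, w i * q i
        = ∑ i, (Real.log (w i) * p i + (p i - w i * q i)) := by
          rw [Finset.sum_add_distrib, Finset.sum_sub_distrib, hsp]
          ring
      _ ≤ ∑ i, p i * Real.log (p i / q i) := Finset.sum_le_sum key
  -- the maximizing measurement
  obtain ⟨P₀, hP₀mem, hmax⟩ := exists_max_meas ρ σ hρ hσ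
  have hP₀ : IsRankOneProjMeas P₀ := (isRankOneProjMeas_iff_trace P₀).mpr hP₀mem
  set M : ℝ := ∑ i, (P₀ i * ρ).trace.re *
    Real.log ((P₀ i * ρ).trace.re / (P₀ i * σ).trace.re) with hM
  have hFle : ∀ P : {P : Fin d → Matrix (Fin d) (Fin d) ℂ // IsRankOneProjMeas P},
      (∑ i, (P.1 i * ρ).trace.re *
        Real.log ((P.1 i * ρ).trace.re / (P.1 i * σ).trace.re)) ≤ M :=
    fun P => hmax P.1 ((isRankOneProjMeas_iff_trace P.1).mp P.2)
  have hGle : ∀ ω : {ω : Matrix (Fin d) (Fin d) ℂ // ω.PosDef},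
      ((ρ * mlog ω.1).trace.re + 1 - (σ * ω.1).trace.re) ≤ M := by
    intro ω
    obtain ⟨P, hP, hle⟩ := hconB ω.1 ω.2
    exact hle.trans (hmax P ((isRankOneProjMeas_iff_trace P).mp hP))
  obtain ⟨ω₀, hω₀⟩ := hconA P₀ hP₀
  haveI : Nonempty {P : Fin d → Matrix (Fin d) (Fin d) ℂ // IsRankOneProjMeas P} := ⟨⟨P₀, hP₀⟩⟩
  haveI : Nonempty {ω : Matrix (Fin d) (Fin d) ℂ // ω.PosDef} := ⟨ω₀⟩
  have hsupF : (⨆ P : {P : Fin d → Matrix (Fin d) (Fin d) ℂ // IsRankOneProjMeas P},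
      ∑ i, (P.1 i * ρ).trace.re *
        Real.log ((P.1 i * ρ).trace.re / (P.1 i * σ).trace.re)) = M := by
    refine le_antisymm (ciSup_le hFle) ?_
    have := le_ciSup (f := fun P : {P : Fin d → Matrix (Fin d) (Fin d) ℂ // IsRankOneProjMeas P} =>
      ∑ i, (P.1 i * ρ).trace.re * Real.log ((P.1 i * ρ).trace.re / (P.1 i * σ).trace.re))
      ⟨M, by rintro y ⟨P, rfl⟩; exact hFle P⟩ ⟨P₀, hP₀⟩
    exact this
  have hsupG : (⨆ ω : {ω : Matrix (Fin d) (Fin d) ℂ // ω.PosDef},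
      ((ρ * mlog ω.1).trace.re + 1 - (σ * ω.1).trace.re)) = M := by
    refine le_antisymm (ciSup_le hGle) ?_
    have := le_ciSup (f := fun ω : {ω : Matrix (Fin d) (Fin d) ℂ // ω.PosDef} =>
      ((ρ * mlog ω.1).trace.re + 1 - (σ * ω.1).trace.re))
      ⟨M, by rintro y ⟨ω, rfl⟩; exact hGle ω⟩ ω₀
    rw [hω₀] at this
    exact this
  exact ⟨hsupF.trans hsupG.symm, ⟨ω₀, hω₀.trans hsupG.symm⟩⟩
end

section
/- For α ∈ (1,∞) and positive definite ρ (tr ρ = 1) and σ, the quantity Q_α^P(ρ||σ) = sup over rank-1 projective measurements {P_i} of Σ_i tr[P_i ρ]^α tr[P_i σ]^{1−α} equals sup_{ω>0} α tr[ρ ω^{1−1/α}] + (1−α) tr[σ ω]. -/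
open Matrix
open scoped ComplexOrder

namespace MRVAux

variable {d : ℕ} {P : Fin d → Matrix (Fin d) (Fin d) ℂ}

lemma meas_mul_sum (hO : ∀ i j, P i * P j = if i = j then P i else 0)
    (a b : Fin d → ℂ) :
    (∑ i, a i • P i) * (∑ j, b j • P j) = ∑ i, (a i * b i) • P i := by
  rw [Finset.sum_mul_sum]
  rw [Finset.sum_comm]
  refine Finset.sum_congr rfl fun i _ => ?_
  have : ∀ j, (a j • P j) * (b i • P i) = (a j * b i) • (if j = i then P j else 0) := by
    intro j
    rw [smul_mul_smul_comm, hO]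
  simp only [this]
  rw [Finset.sum_eq_single i]
  · simp [mul_comm]
  · intro j _ hji; simp [hji]
  · intro h; simp at h

lemma meas_pow (hO : ∀ i j, P i * P j = if i = j then P i else 0)
    (hS : ∑ i, P i = 1) (a : Fin d → ℂ) (n : ℕ) :
    (∑ i, a i • P i) ^ n = ∑ i, (a i ^ n) • P i := by
  induction n with
  | zero => simpa using hS.symm
  | succ n ih =>
      rw [pow_succ, ih, meas_mul_sum hO]
      simp [pow_succ]

lemma meas_sa (hH : ∀ i, (P i).IsHermitian) (m : Fin d → ℝ) :
    _root_.IsSelfAdjoint (∑ i, (m i : ℂ) • P i) := by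
  rw [_root_.IsSelfAdjoint, star_sum]
  refine Finset.sum_congr rfl fun i _ => ?_
  rw [star_smul]
  rw [Matrix.star_eq_conjTranspose, (hH i).eq]
  simp

lemma meas_spectrum_subset (hO : ∀ i j, P i * P j = if i = j then P i else 0)
    (hS : ∑ i, P i = 1) (m : Fin d → ℝ) :
    spectrum ℝ (∑ i, (m i : ℂ) • P i) ⊆ Set.range m := by
  intro x hx
  by_contra hxr
  rw [spectrum.mem_iff] at hx
  apply hx
  have hne : ∀ i, x - m i ≠ 0 := by
    intro i h
    exact hxr ⟨i, by linarith [sub_eq_zero.mp h]⟩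
  have hXeq : algebraMap ℝ (Matrix (Fin d) (Fin d) ℂ) x - (∑ i, (m i : ℂ) • P i)
      = ∑ i, ((x - m i : ℝ) : ℂ) • P i := by
    rw [Algebra.algebraMap_eq_smul_one]
    have h1 : (x : ℝ) • (1 : Matrix (Fin d) (Fin d) ℂ) = ∑ i, ((x : ℝ) : ℂ) • P i := by
      rw [← hS, Finset.smul_sum]
      refine Finset.sum_congr rfl fun i _ => ?_
      rw [← algebraMap_smul ℂ (x : ℝ) (P i)]
      norm_num
    rw [h1, ← Finset.sum_sub_distrib]
    refine Finset.sum_congr rfl fun i _ => ?_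
    rw [← sub_smul]
    norm_num
  rw [hXeq]
  refine isUnit_iff_exists.mpr ⟨∑ i, (((x - m i)⁻¹ : ℝ) : ℂ) • P i, ?_, ?_⟩
  · rw [meas_mul_sum hO]
    rw [← hS]
    refine Finset.sum_congr rfl fun i _ => ?_
    rw [← Complex.ofReal_mul, mul_inv_cancel₀ (hne i)]
    simp
  · rw [meas_mul_sum hO]
    rw [← hS]
    refine Finset.sum_congr rfl fun i _ => ?_
    rw [← Complex.ofReal_mul, inv_mul_cancel₀ (hne i)]
    simp

lemma coe_smul_mat (r : ℝ) (A : Matrix (Fin d) (Fin d) ℂ) : (r : ℂ) • A = r • A := by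
  rw [← algebraMap_smul ℂ r A, Complex.coe_algebraMap]

lemma meas_aeval (hO : ∀ i j, P i * P j = if i = j then P i else 0)
    (hS : ∑ i, P i = 1) (m : Fin d → ℝ) (g : Polynomial ℝ) :
    Polynomial.aeval (∑ i, (m i : ℂ) • P i) g = ∑ i, ((g.eval (m i) : ℝ) : ℂ) • P i := by
  rw [Polynomial.aeval_eq_sum_range]
  have h1 : ∀ n : ℕ, (∑ i, (m i : ℂ) • P i) ^ n = ∑ i, ((m i ^ n : ℝ) : ℂ) • P i := by
    intro n
    rw [meas_pow hO hS]
    push_cast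
    rfl
  calc ∑ n ∈ Finset.range (g.natDegree + 1), g.coeff n • (∑ i, (m i : ℂ) • P i) ^ n
      = ∑ n ∈ Finset.range (g.natDegree + 1), ∑ i, (g.coeff n * m i ^ n) • P i := by
        refine Finset.sum_congr rfl fun n _ => ?_
        rw [h1 n, Finset.smul_sum]
        refine Finset.sum_congr rfl fun i _ => ?_
        rw [coe_smul_mat, smul_smul]
    _ = ∑ i, (∑ n ∈ Finset.range (g.natDegree + 1), g.coeff n * m i ^ n) • P i := by
        rw [Finset.sum_comm]
        refine Finset.sum_congr rfl fun i _ => ?_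
        rw [Finset.sum_smul]
    _ = ∑ i, ((g.eval (m i) : ℝ) : ℂ) • P i := by
        refine Finset.sum_congr rfl fun i _ => ?_
        rw [← Polynomial.eval_eq_sum_range]
        rw [coe_smul_mat]

lemma meas_cfc (hH : ∀ i, (P i).IsHermitian)
    (hO : ∀ i j, P i * P j = if i = j then P i else 0)
    (hS : ∑ i, P i = 1) (m : Fin d → ℝ) (f : ℝ → ℝ) :
    cfc (R := ℝ) f (∑ i, (m i : ℂ) • P i) = ∑ i, ((f (m i) : ℝ) : ℂ) • P i := by
  have hsa := meas_sa hH m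
  set s : Finset ℝ := Finset.univ.image m with hs
  set g : Polynomial ℝ := Lagrange.interpolate s id f with hgdef
  have hg : ∀ i, g.eval (m i) = f (m i) := by
    intro i
    have : m i ∈ s := Finset.mem_image_of_mem m (Finset.mem_univ i)
    exact Lagrange.eval_interpolate_at_node f (v := id) (Set.injOn_id _) this
  have hcongr : cfc (R := ℝ) f (∑ i, (m i : ℂ) • P i)
      = cfc (R := ℝ) g.eval (∑ i, (m i : ℂ) • P i) := by
    apply cfc_congr
    intro x hx
    obtain ⟨i, rfl⟩ := meas_spectrum_subset hO hS m hx
    exact (hg i).symm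
  rw [hcongr, cfc_polynomial g _ hsa, meas_aeval hO hS]
  refine Finset.sum_congr rfl fun i _ => ?_
  rw [hg i]

lemma sum_mulVec {k : Type*} [Fintype k] (M : k → Matrix (Fin d) (Fin d) ℂ) (x : Fin d → ℂ) :
    (∑ i, M i) *ᵥ x = ∑ i, M i *ᵥ x := by
  ext j
  simp [mulVec, dotProduct, Matrix.sum_apply, Finset.sum_mul]
  rw [Finset.sum_comm]

lemma dot_sum {k : Type*} [Fintype k] (v : Fin d → ℂ) (w : k → Fin d → ℂ) :
    dotProduct v (∑ i, w i) = ∑ i, dotProduct v (w i) := by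
  simp [dotProduct, Finset.sum_apply, Finset.mul_sum]
  rw [Finset.sum_comm]

lemma quad_form_proj (Q : Matrix (Fin d) (Fin d) ℂ) (hH : Q.IsHermitian)
    (hid : Q * Q = Q) (x : Fin d → ℂ) :
    dotProduct (star x) (Q *ᵥ x) = dotProduct (star (Q *ᵥ x)) (Q *ᵥ x) := by
  conv_lhs => rw [← hid]
  rw [← mulVec_mulVec]
  rw [dotProduct_mulVec (star x) Q (Q *ᵥ x)]
  congr 1
  rw [star_mulVec, hH.eq]

lemma star_dot_self_re (y : Fin d → ℂ) :
    dotProduct (star y) y = ((∑ a, Complex.normSq (y a) : ℝ) : ℂ) := by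
  rw [dotProduct]
  push_cast
  refine Finset.sum_congr rfl fun a _ => ?_
  simp [Complex.normSq_eq_conj_mul_self]

lemma meas_posdef (hH : ∀ i, (P i).IsHermitian)
    (hO : ∀ i j, P i * P j = if i = j then P i else 0)
    (hS : ∑ i, P i = 1) (m : Fin d → ℝ) (hm : ∀ i, 0 < m i) :
    (∑ i, (m i : ℂ) • P i).PosDef := by
  refine Matrix.PosDef.of_dotProduct_mulVec_pos (meas_sa hH m) fun x hx => ?_
  have hidem : ∀ i, P i * P i = P i := fun i => by simpa using hO i i
  have key : dotProduct (star x) ((∑ i, (m i : ℂ) • P i) *ᵥ x)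
      = ((∑ i, m i * ∑ a, Complex.normSq ((P i *ᵥ x) a) : ℝ) : ℂ) := by
    rw [sum_mulVec, dot_sum]
    simp only [Complex.ofReal_sum, Complex.ofReal_mul]
    refine Finset.sum_congr rfl fun i _ => ?_
    rw [smul_mulVec, dotProduct_smul, smul_eq_mul]
    congr 1
    rw [quad_form_proj (P i) (hH i) (hidem i) x, star_dot_self_re]
    rw [Complex.ofReal_sum]
  rw [key]
  rw [Complex.zero_lt_real]
  have hex : ∃ i, P i *ᵥ x ≠ 0 := by
    by_contra h
    push_neg at h
    apply hx
    have : (1 : Matrix (Fin d) (Fin d) ℂ) *ᵥ x = 0 := by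
      rw [← hS, sum_mulVec]
      simp [h]
    simpa using this
  obtain ⟨i0, hi0⟩ := hex
  refine Finset.sum_pos' (fun i _ => ?_) ⟨i0, Finset.mem_univ i0, ?_⟩
  · exact mul_nonneg (hm i).le (Finset.sum_nonneg fun a _ => Complex.normSq_nonneg _)
  · refine mul_pos (hm i0) ?_
    have : ∃ a, (P i0 *ᵥ x) a ≠ 0 := by
      by_contra h
      push_neg at h
      exact hi0 (funext h)
    obtain ⟨a, ha⟩ := this
    refine Finset.sum_pos' (fun b _ => Complex.normSq_nonneg _) ⟨a, Finset.mem_univ a, ?_⟩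
    exact Complex.normSq_pos.mpr ha

lemma trace_mul_sum_smul (X : Matrix (Fin d) (Fin d) ℂ) (r : Fin d → ℝ) :
    (X * ∑ i, (r i : ℂ) • P i).trace.re = ∑ i, r i * ((P i * X).trace.re) := by
  rw [Finset.mul_sum, trace_sum, Complex.re_sum]
  refine Finset.sum_congr rfl fun i _ => ?_
  rw [mul_smul_comm, trace_smul, trace_mul_comm]
  simp [smul_eq_mul, Complex.mul_re]

lemma trace_proj_pos {Q ρ : Matrix (Fin d) (Fin d) ℂ} (hH : Q.IsHermitian)
    (hid : Q * Q = Q) (hQ : Q ≠ 0) (hρ : ρ.PosDef) :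
    0 < (Q * ρ).trace.re := by
  have h1 : (Q * ρ).trace = (Q * ρ * Q).trace := by
    conv_rhs => rw [trace_mul_cycle, hid]
  have hQs : ∀ a b, Q a b = star (Q b a) := by
    intro a b
    conv_lhs => rw [← hH.eq]
    simp [conjTranspose_apply]
  have h2 : ∀ k, (Q * ρ * Q) k k = dotProduct (star (star (Q k))) (ρ *ᵥ (star (Q k))) := by
    intro k
    simp only [mul_apply, mulVec, dotProduct, Pi.star_apply, star_star]
    simp only [Finset.sum_mul]
    rw [Finset.sum_comm]
    refine Finset.sum_congr rfl fun a _ => ?_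
    rw [Finset.mul_sum]
    refine Finset.sum_congr rfl fun b _ => ?_
    rw [hQs b k]
    ring
  have hex : ∃ k, star (Q k) ≠ 0 := by
    by_contra h
    push_neg at h
    apply hQ
    ext k l
    have := congr_fun (h k) l
    simpa using this
  obtain ⟨k0, hk0⟩ := hex
  rw [h1, trace, Complex.re_sum]
  refine Finset.sum_pos' (fun k _ => ?_) ⟨k0, Finset.mem_univ k0, ?_⟩
  · simp only [diag_apply, h2]
    by_cases hk : star (Q k) = 0
    · simp [hk]
    · exact (hρ.re_dotProduct_pos hk).le
  · simp only [diag_apply, h2]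
    exact hρ.re_dotProduct_pos hk0

lemma scalar_ineq {α a b m : ℝ} (hα : 1 < α) (ha : 0 < a) (hb : 0 < b) (hm : 0 < m) :
    α * (a * m ^ (1 - 1/α)) + (1 - α) * (b * m) ≤ a ^ α * b ^ (1 - α) := by
  have hα0 : (0:ℝ) < α := by linarith
  have hα1 : α - 1 ≠ 0 := by intro h; rw [sub_eq_zero] at h; simp [h.symm] at hα
  set q : ℝ := α / (α - 1) with hq
  have hpq : α.HolderConjugate q := (Real.holderConjugate_iff_eq_conjExponent hα).mpr hq
  set x : ℝ := a * b ^ ((1 - α)/α) with hx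
  set y : ℝ := b ^ ((α - 1)/α) * m ^ (1 - 1/α) with hy
  have hxpos : 0 < x := mul_pos ha (Real.rpow_pos_of_pos hb _)
  have hypos : 0 < y := mul_pos (Real.rpow_pos_of_pos hb _) (Real.rpow_pos_of_pos hm _)
  have hxy : x * y = a * m ^ (1 - 1/α) := by
    rw [hx, hy]
    have h1 : b ^ ((1 - α)/α) * b ^ ((α - 1)/α) = 1 := by
      rw [← Real.rpow_add hb, show (1 - α)/α + (α - 1)/α = 0 by ring, Real.rpow_zero]
    calc a * b ^ ((1 - α)/α) * (b ^ ((α - 1)/α) * m ^ (1 - 1/α))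
        = a * (b ^ ((1 - α)/α) * b ^ ((α - 1)/α)) * m ^ (1 - 1/α) := by ring
      _ = a * m ^ (1 - 1/α) := by rw [h1]; ring
  have hxp : x ^ α = a ^ α * b ^ (1 - α) := by
    rw [hx, Real.mul_rpow ha.le (Real.rpow_pos_of_pos hb _).le, ← Real.rpow_mul hb.le]
    congr 1
    field_simp
  have hyq : y ^ q = b * m := by
    rw [hy, Real.mul_rpow (Real.rpow_pos_of_pos hb _).le (Real.rpow_pos_of_pos hm _).le,
      ← Real.rpow_mul hb.le, ← Real.rpow_mul hm.le]
    have e1 : (α - 1)/α * q = 1 := by rw [hq]; field_simp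
    have e2 : (1 - 1/α) * q = 1 := by rw [hq]; field_simp
    rw [e1, e2, Real.rpow_one, Real.rpow_one]
  have hyoung := Real.young_inequality_of_nonneg hxpos.le hypos.le hpq
  rw [hxy, hxp, hyq] at hyoung
  have hqval : α / q = α - 1 := by rw [hq]; field_simp
  have : α * (a * m ^ (1 - 1/α)) ≤ a ^ α * b ^ (1 - α) + (α - 1) * (b * m) := by
    have := mul_le_mul_of_nonneg_left hyoung hα0.le
    rw [mul_add] at this
    have e3 : α * (a ^ α * b ^ (1 - α) / α) = a ^ α * b ^ (1 - α) := by
      field_simp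
    have e4 : α * (b * m / q) = (α - 1) * (b * m) := by
      rw [mul_comm α, div_mul_eq_mul_div, mul_comm, ← div_mul_eq_mul_div, hqval]
    rw [e3, e4] at this
    exact this
  linarith

lemma scalar_eq {α a b : ℝ} (hα : 1 < α) (ha : 0 < a) (hb : 0 < b) :
    α * (a * ((a/b) ^ α) ^ (1 - 1/α)) + (1 - α) * (b * ((a/b) ^ α))
      = a ^ α * b ^ (1 - α) := by
  have hα0 : (0:ℝ) < α := by linarith
  have hab : 0 < a / b := div_pos ha hb
  have h1 : ((a/b) ^ α) ^ (1 - 1/α) = (a/b) ^ (α - 1) := by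
    rw [← Real.rpow_mul hab.le]
    congr 1
    field_simp
  have h2 : a * (a/b) ^ (α - 1) = a ^ α * b ^ (1 - α) := by
    rw [Real.div_rpow ha.le hb.le]
    rw [div_eq_mul_inv, ← Real.rpow_neg hb.le]
    have : a * (a ^ (α - 1) * b ^ (-(α - 1))) = (a * a ^ (α - 1)) * b ^ (1 - α) := by
      rw [show -(α - 1) = 1 - α by ring]
      ring
    rw [this]
    congr 1
    conv_lhs => rw [show a * a ^ (α - 1) = a ^ (1:ℝ) * a ^ (α - 1) by rw [Real.rpow_one]]
    rw [← Real.rpow_add ha]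
    norm_num
  have h3 : b * (a/b) ^ α = a ^ α * b ^ (1 - α) := by
    rw [Real.div_rpow ha.le hb.le, div_eq_mul_inv, ← Real.rpow_neg hb.le]
    have : b * (a ^ α * b ^ (-α)) = a ^ α * (b ^ (1:ℝ) * b ^ (-α)) := by
      rw [Real.rpow_one]; ring
    rw [this, ← Real.rpow_add hb]
    congr 1
  rw [h1, h2, h3]
  ring

lemma posdef_decomp {ω : Matrix (Fin d) (Fin d) ℂ} (hω : ω.PosDef) :
    ∃ P : Fin d → Matrix (Fin d) (Fin d) ℂ, IsRankOneProjMeas P ∧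
      ∃ m : Fin d → ℝ, (∀ i, 0 < m i) ∧ ω = ∑ i, (m i : ℂ) • P i := by
  have hH := hω.1
  set V : Matrix (Fin d) (Fin d) ℂ := (hH.eigenvectorUnitary : Matrix (Fin d) (Fin d) ℂ)
    with hVdef
  have hVmem := hH.eigenvectorUnitary.2
  have hV1 : V * star V = 1 := (Matrix.mem_unitaryGroup_iff).mp hVmem
  have hV2 : star V * V = 1 := (Matrix.mem_unitaryGroup_iff').mp hVmem
  have hVdet : IsUnit V.det := by
    refine IsUnit.of_mul_eq_one (star V).det ?_
    rw [← det_mul, hV1, det_one]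
  have hVsdet : IsUnit (star V).det := by
    refine IsUnit.of_mul_eq_one V.det ?_
    rw [← det_mul, hV2, det_one]
  set E : Fin d → Matrix (Fin d) (Fin d) ℂ := fun i => diagonal (Pi.single i 1) with hEdef
  set P : Fin d → Matrix (Fin d) (Fin d) ℂ := fun i => V * E i * star V with hPdef
  have hEherm : ∀ i, (E i).IsHermitian := by
    intro i
    have hstar : star (Pi.single i 1 : Fin d → ℂ) = Pi.single i 1 := by
      funext k
      rcases eq_or_ne k i with rfl | hki
      · simp
      · simp [hki]
    rw [hEdef]
    show (diagonal (Pi.single i 1) : Matrix (Fin d) (Fin d) ℂ).IsHermitian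
    rw [IsHermitian, diagonal_conjTranspose, hstar]
  have hEE : ∀ i j, E i * E j = if i = j then E i else 0 := by
    intro i j
    rw [hEdef]
    show diagonal (Pi.single i 1) * diagonal (Pi.single j 1) = _
    rw [diagonal_mul_diagonal]
    rcases eq_or_ne i j with rfl | h
    · rw [if_pos rfl]
      show _ = diagonal (Pi.single i 1)
      ext a b
      rcases eq_or_ne a b with rfl | hab
      · rw [diagonal_apply_eq, diagonal_apply_eq]
        rcases eq_or_ne a i with rfl | hai
        · simp
        · simp [Pi.single_apply, hai]
      · rw [diagonal_apply_ne _ hab, diagonal_apply_ne _ hab]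
    · rw [if_neg h]
      show _ = (0 : Matrix (Fin d) (Fin d) ℂ)
      ext a b
      simp only [Matrix.zero_apply]
      rcases eq_or_ne a b with rfl | hab
      · rw [diagonal_apply_eq]
        simp only [Pi.single_apply, ite_mul, one_mul, zero_mul]
        rcases eq_or_ne a i with rfl | hai
        · rw [if_pos rfl, if_neg (fun hh : a = j => h hh)]
        · rw [if_neg hai]
      · rw [diagonal_apply_ne _ hab]
  have hEsum : ∑ i, E i = 1 := by
    rw [hEdef]
    ext a b
    rw [Matrix.sum_apply]
    rcases eq_or_ne a b with rfl | hab
    · simp [diagonal_apply_eq, Pi.single_apply]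
    · simp [diagonal_apply_ne _ hab, one_apply_ne hab]
  have hmeas : IsRankOneProjMeas P := by
    refine ⟨?_, ?_, ?_, ?_⟩
    · intro i
      rw [hPdef]
      exact isHermitian_mul_mul_conjTranspose V (hEherm i)
    · intro i j
      have hmul : P i * P j = V * (E i * E j) * star V := by
        rw [hPdef]
        simp only [← mul_assoc]
        rw [mul_assoc (V * E i) (star V) V, hV2, mul_one]
        try simp only [mul_assoc]
      rw [hmul, hEE i j]
      rcases eq_or_ne i j with rfl | h
      · simp [hPdef]
      · simp [h]
    · rw [hPdef]
      simp only
      rw [← Finset.sum_mul, ← Finset.mul_sum, hEsum, mul_one, hV1]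
    · intro i
      rw [hPdef]
      simp only
      rw [rank_mul_eq_left_of_isUnit_det _ _ hVsdet, rank_mul_eq_right_of_isUnit_det _ _ hVdet]
      rw [hEdef]
      show (diagonal (Pi.single i 1) : Matrix (Fin d) (Fin d) ℂ).rank = 1
      rw [rank_diagonal]
      rw [Fintype.card_eq_one_iff]
      refine ⟨⟨i, by simp⟩, ?_⟩
      rintro ⟨j, hj⟩
      have hji : j = i := by
        by_contra hji
        exact hj (Pi.single_eq_of_ne hji 1)
      simp [hji]
  refine ⟨P, hmeas, hH.eigenvalues, fun i => hω.eigenvalues_pos i, ?_⟩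
  have hdiag : diagonal (RCLike.ofReal ∘ hH.eigenvalues : Fin d → ℂ)
      = ∑ i, ((hH.eigenvalues i : ℝ) : ℂ) • E i := by
    rw [hEdef]
    ext a b
    simp only [Matrix.sum_apply, Matrix.smul_apply, diagonal_apply, smul_eq_mul, Pi.single_apply,
      Function.comp_apply, mul_ite, mul_one, mul_zero]
    rcases eq_or_ne a b with rfl | hab
    · simp [Finset.sum_ite_eq]
    · simp [hab]
  calc ω = V * diagonal (RCLike.ofReal ∘ hH.eigenvalues) * star V := hH.spectral_theorem
    _ = ∑ i, ((hH.eigenvalues i : ℝ) : ℂ) • P i := by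
        rw [hdiag, Finset.mul_sum, Finset.sum_mul]
        refine Finset.sum_congr rfl fun i _ => ?_
        rw [mul_smul_comm, smul_mul_assoc]

end MRVAux

/-- Variational expression for the projectively measured Rényi quantity `Q_α^P`, `α > 1`. -/
theorem measured_renyi_variational_gt_one {d : ℕ} (α : ℝ) (hα : 1 < α)
    (ρ σ : Matrix (Fin d) (Fin d) ℂ) (hρ : ρ.PosDef) (hσ : σ.PosDef)
    (hρ1 : ρ.trace = 1) :
    (⨆ P : {P : Fin d → Matrix (Fin d) (Fin d) ℂ // IsRankOneProjMeas P},
        ∑ i, ((P.1 i * ρ).trace.re) ^ α * ((P.1 i * σ).trace.re) ^ (1 - α))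
      = ⨆ ω : {ω : Matrix (Fin d) (Fin d) ℂ // ω.PosDef},
          (α * (ρ * mpow ω.1 (1 - 1 / α)).trace.re + (1 - α) * (σ * ω.1).trace.re) := by
  classical
  -- positivity of measured probabilities
  have hpos : ∀ (P : Fin d → Matrix (Fin d) (Fin d) ℂ), IsRankOneProjMeas P → ∀ i,
      0 < ((P i * ρ).trace.re) ∧ 0 < ((P i * σ).trace.re) := by
    intro P hP i
    have hid : P i * P i = P i := by simpa using hP.2.1 i i
    have hne : P i ≠ 0 := by
      intro h
      have := hP.2.2.2 i
      rw [h, Matrix.rank_zero] at this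
      exact zero_ne_one this
    exact ⟨MRVAux.trace_proj_pos (hP.1 i) hid hne hρ,
      MRVAux.trace_proj_pos (hP.1 i) hid hne hσ⟩
  -- the value of the variational functional at a spectral decomposition
  have main_eval : ∀ (P : Fin d → Matrix (Fin d) (Fin d) ℂ), IsRankOneProjMeas P →
      ∀ m : Fin d → ℝ, (∀ i, 0 < m i) →
      α * (ρ * mpow (∑ i, (m i : ℂ) • P i) (1 - 1/α)).trace.re
        + (1 - α) * (σ * ∑ i, (m i : ℂ) • P i).trace.re
      = ∑ i, (α * (((P i * ρ).trace.re) * (m i) ^ (1 - 1/α))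
          + (1 - α) * (((P i * σ).trace.re) * m i)) := by
    intro P hP m hm
    have h1 : mpow (∑ i, (m i : ℂ) • P i) (1 - 1/α)
        = ∑ i, ((m i ^ (1 - 1/α) : ℝ) : ℂ) • P i :=
      MRVAux.meas_cfc hP.1 hP.2.1 hP.2.2.1 m (fun t => t ^ (1 - 1/α))
    have h2 : (σ * ∑ i, (m i : ℂ) • P i).trace.re = ∑ i, m i * ((P i * σ).trace.re) :=
      MRVAux.trace_mul_sum_smul σ m
    have h3 : (ρ * mpow (∑ i, (m i : ℂ) • P i) (1 - 1/α)).trace.re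
        = ∑ i, (m i ^ (1 - 1/α)) * ((P i * ρ).trace.re) := by
      rw [h1]
      exact MRVAux.trace_mul_sum_smul ρ (fun i => m i ^ (1 - 1/α))
    rw [h2, h3, Finset.mul_sum, Finset.mul_sum, ← Finset.sum_add_distrib]
    refine Finset.sum_congr rfl fun i _ => ?_
    ring
  refine csSup_eq_csSup_of_forall_exists_le ?_ ?_
  · rintro x ⟨P, rfl⟩
    -- build the optimal ω from the measurement P
    set p : Fin d → ℝ := fun i => ((P.1 i * ρ).trace.re) with hpdef
    set q : Fin d → ℝ := fun i => ((P.1 i * σ).trace.re) with hqdef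
    have hp : ∀ i, 0 < p i := fun i => (hpos P.1 P.2 i).1
    have hq : ∀ i, 0 < q i := fun i => (hpos P.1 P.2 i).2
    set m : Fin d → ℝ := fun i => (p i / q i) ^ α with hmdef
    have hm : ∀ i, 0 < m i := fun i => Real.rpow_pos_of_pos (div_pos (hp i) (hq i)) _
    have hpd : (∑ i, (m i : ℂ) • P.1 i).PosDef :=
      MRVAux.meas_posdef P.2.1 P.2.2.1 P.2.2.2.1 m hm
    refine ⟨_, ⟨(⟨∑ i, (m i : ℂ) • P.1 i, hpd⟩ : {ω : Matrix (Fin d) (Fin d) ℂ // ω.PosDef}),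
      rfl⟩, ?_⟩
    show ∑ i, (p i) ^ α * (q i) ^ (1 - α)
        ≤ α * (ρ * mpow (∑ i, (m i : ℂ) • P.1 i) (1 - 1/α)).trace.re
          + (1 - α) * (σ * ∑ i, (m i : ℂ) • P.1 i).trace.re
    rw [main_eval P.1 P.2 m hm]
    refine le_of_eq ?_
    refine Finset.sum_congr rfl fun i _ => ?_
    exact (MRVAux.scalar_eq hα (hp i) (hq i)).symm
  · rintro y ⟨ω, rfl⟩
    obtain ⟨P, hP, m, hm, hωeq⟩ := MRVAux.posdef_decomp ω.2
    refine ⟨_, ⟨(⟨P, hP⟩ : {P : Fin d → Matrix (Fin d) (Fin d) ℂ // IsRankOneProjMeas P}),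
      rfl⟩, ?_⟩
    show α * (ρ * mpow ω.1 (1 - 1/α)).trace.re + (1 - α) * (σ * ω.1).trace.re
        ≤ ∑ i, ((P i * ρ).trace.re) ^ α * ((P i * σ).trace.re) ^ (1 - α)
    have : α * (ρ * mpow ω.1 (1 - 1/α)).trace.re + (1 - α) * (σ * ω.1).trace.re
        = ∑ i, (α * (((P i * ρ).trace.re) * (m i) ^ (1 - 1/α))
          + (1 - α) * (((P i * σ).trace.re) * m i)) := by
      rw [hωeq]
      exact main_eval P hP m hm
    rw [this]
    refine Finset.sum_le_sum fun i _ => ?_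
    exact MRVAux.scalar_ineq hα (hpos P hP i).1 (hpos P hP i).2 (hm i)
end

section
/- Golden–Thompson inequality: for Hermitian d×d matrices X and Y, tr[exp(X+Y)] ≤ tr[exp(X) exp(Y)]. -/
open Matrix
open scoped ComplexOrder

section GoldenThompsonProof
set_option maxHeartbeats 1600000
open Finset Filter NormedSpace
open scoped Nat

namespace GT

variable {d : ℕ}

abbrev Mat (d : ℕ) := Matrix (Fin d) (Fin d) ℂ

lemma trace_mul_sum (M N : Mat d) :
    (M * N).trace = ∑ i, ∑ j, M i j * N j i := by
  simp [Matrix.trace, Matrix.mul_apply, Matrix.diag]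

lemma trace_mul_conjTranspose_re (M : Mat d) :
    ((M * Mᴴ).trace).re = ∑ i, ∑ j, Complex.normSq (M i j) := by
  rw [trace_mul_sum]
  have : ∀ i j, M i j * Mᴴ j i = (Complex.normSq (M i j) : ℂ) := by
    intro i j
    rw [Matrix.conjTranspose_apply, ← Complex.mul_conj]
    rfl
  simp_rw [this]
  push_cast
  simp [Complex.re_sum]

lemma trace_mul_conjTranspose_nonneg (M : Mat d) : 0 ≤ ((M * Mᴴ).trace).re := by
  rw [trace_mul_conjTranspose_re]
  refine Finset.sum_nonneg fun i _ => Finset.sum_nonneg fun j _ => Complex.normSq_nonneg _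

/-- step 1 : `Re tr (M²) ≤ Re tr (M Mᴴ)` -/
lemma re_trace_sq_le (M : Mat d) : ((M * M).trace).re ≤ ((M * Mᴴ).trace).re := by
  rw [trace_mul_sum, trace_mul_conjTranspose_re, Complex.re_sum]
  simp_rw [Complex.re_sum]
  have h1 : ∑ i, ∑ j, (M i j * M j i).re
      ≤ ∑ i : Fin d, ∑ j, (Complex.normSq (M i j) + Complex.normSq (M j i)) / 2 := by
    refine Finset.sum_le_sum fun i _ => Finset.sum_le_sum fun j _ => ?_
    have h2 : (M i j * M j i).re ≤ ‖M i j‖ * ‖M j i‖ := by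
      calc (M i j * M j i).re ≤ ‖M i j * M j i‖ := Complex.re_le_norm _
        _ = _ := norm_mul _ _
    refine h2.trans ?_
    have := two_mul_le_add_sq (‖M i j‖) (‖M j i‖)
    rw [Complex.sq_norm, Complex.sq_norm] at this
    linarith
  refine h1.trans_eq ?_
  simp_rw [← Finset.sum_div, Finset.sum_add_distrib]
  rw [show (∑ i : Fin d, ∑ j, Complex.normSq (M j i))
      = ∑ i : Fin d, ∑ j, Complex.normSq (M i j) from Finset.sum_comm]
  rw [add_self_div_two]

/-- Cauchy–Schwarz for Hermitian matrices. -/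
lemma re_trace_mul_le_sqrt (P Q : Mat d) (hP : Pᴴ = P) (hQ : Qᴴ = Q) :
    ((P * Q).trace).re ≤
      Real.sqrt (((P * P).trace).re) * Real.sqrt (((Q * Q).trace).re) := by
  have hPP : ((P * P).trace).re = ∑ i, ∑ j, Complex.normSq (P i j) := by
    rw [show P * P = P * Pᴴ by rw [hP]]
    exact trace_mul_conjTranspose_re P
  have hQQ : ((Q * Q).trace).re = ∑ i, ∑ j, Complex.normSq (Q i j) := by
    rw [show Q * Q = Q * Qᴴ by rw [hQ]]
    exact trace_mul_conjTranspose_re Q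
  rw [hPP, hQQ, trace_mul_sum, Complex.re_sum]
  simp_rw [Complex.re_sum]
  have h1 : ∀ i j : Fin d, (P i j * Q j i).re ≤ ‖P i j‖ * ‖Q i j‖ := by
    intro i j
    have hq : Q j i = starRingEnd ℂ (Q i j) := by
      have h := congrFun (congrFun hQ j) i
      rw [Matrix.conjTranspose_apply, RCLike.star_def] at h
      exact h.symm
    rw [hq]
    calc (P i j * starRingEnd ℂ (Q i j)).re ≤ ‖P i j * starRingEnd ℂ (Q i j)‖ :=
        Complex.re_le_norm _
      _ = _ := by rw [norm_mul, Complex.norm_conj]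
  calc ∑ i, ∑ j, (P i j * Q j i).re
      ≤ ∑ i, ∑ j, ‖P i j‖ * ‖Q i j‖ :=
        Finset.sum_le_sum fun i _ => Finset.sum_le_sum fun j _ => h1 i j
    _ = ∑ p : Fin d × Fin d, ‖P p.1 p.2‖ * ‖Q p.1 p.2‖ :=
        (Fintype.sum_prod_type (fun p : Fin d × Fin d => ‖P p.1 p.2‖ * ‖Q p.1 p.2‖)).symm
    _ ≤ Real.sqrt (∑ p : Fin d × Fin d, ‖P p.1 p.2‖ ^ 2) *
        Real.sqrt (∑ p : Fin d × Fin d, ‖Q p.1 p.2‖ ^ 2) :=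
        Real.sum_mul_le_sqrt_mul_sqrt _ _ _
    _ = _ := by
        rw [show (∑ p : Fin d × Fin d, ‖P p.1 p.2‖ ^ 2)
            = ∑ i, ∑ j, Complex.normSq (P i j) by
          rw [Fintype.sum_prod_type]; exact Finset.sum_congr rfl fun i _ =>
            Finset.sum_congr rfl fun j _ => Complex.sq_norm _]
        rw [show (∑ p : Fin d × Fin d, ‖Q p.1 p.2‖ ^ 2)
            = ∑ i, ∑ j, Complex.normSq (Q i j) by
          rw [Fintype.sum_prod_type]; exact Finset.sum_congr rfl fun i _ =>
            Finset.sum_congr rfl fun j _ => Complex.sq_norm _]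

lemma mul_pow_aux (X Y : Mat d) (m : ℕ) : (X * Y) ^ (m + 1) = X * ((Y * X) ^ m * Y) := by
  induction m with
  | zero => simp
  | succ m ih => simp only [pow_succ, ih, mul_assoc]

/-- cyclic invariance of `tr ((XY)^n)`. -/
lemma trace_pow_mul_comm (X Y : Mat d) {n : ℕ} (hn : n ≠ 0) :
    ((X * Y) ^ n).trace = ((Y * X) ^ n).trace := by
  obtain ⟨m, rfl⟩ := Nat.exists_eq_succ_of_ne_zero hn
  rw [mul_pow_aux, Matrix.trace_mul_comm, mul_assoc, ← pow_succ]


theorem GW (k : ℕ) :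
    (∀ A B : Mat d, Aᴴ = A → Bᴴ = B →
      (((A * B) ^ (2 ^ k)).trace).re ≤ ((A ^ (2 ^ k) * B ^ (2 ^ k)).trace).re) ∧
    (∀ S : Mat d,
      ((S ^ (2 ^ k) * Sᴴ ^ (2 ^ k)).trace).re ≤ (((S * Sᴴ) ^ (2 ^ k)).trace).re) := by
  induction k with
  | zero => exact ⟨fun A B _ _ => by simp, fun S => by simp⟩
  | succ k ih =>
    obtain ⟨G, W⟩ := ih
    have hpow : (2 : ℕ) ^ (k + 1) = 2 ^ k * 2 := by rw [pow_succ]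
    have hne : (2 : ℕ) ^ k ≠ 0 := by positivity
    have hne' : (2 : ℕ) ^ (k + 1) ≠ 0 := by positivity
    constructor
    · intro A B hA hB
      set n := 2 ^ k with hn
      -- (1)+(2): Re tr ((AB)^{2n}) ≤ Re tr ((AB)^n ((AB)ᴴ)^n)
      have hM : ((A * B) ^ (2 ^ (k + 1))) = ((A * B) ^ n) * ((A * B) ^ n) := by
        rw [hpow, pow_mul, sq]
      have hMH : ((A * B) ^ n)ᴴ = ((A * B)ᴴ) ^ n := by rw [conjTranspose_pow]
      have step1 : (((A * B) ^ (2 ^ (k + 1))).trace).re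
          ≤ (((A * B) ^ n * ((A * B)ᴴ) ^ n).trace).re := by
        rw [hM, ← hMH]
        exact re_trace_sq_le _
      -- (3): W with S = A*B
      have step2 : (((A * B) ^ n * ((A * B)ᴴ) ^ n).trace).re
          ≤ ((((A * B) * (A * B)ᴴ) ^ n).trace).re := W (A * B)
      -- (4): tr ((A B Bᴴ Aᴴ)^n) = tr ((A² B²)^n) (with hermitian rewrites)
      have hABH : (A * B) * (A * B)ᴴ = (A * (B * B)) * A := by
        rw [conjTranspose_mul, hA, hB]
        noncomm_ring
      have step3 : ((((A * B) * (A * B)ᴴ) ^ n).trace) = (((A * A) * (B * B)) ^ n).trace := by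
        rw [hABH, trace_pow_mul_comm _ _ hne]
        congr 1
        congr 1
        noncomm_ring
      -- (5): G on A², B²
      have hA2 : (A * A)ᴴ = A * A := by rw [conjTranspose_mul, hA]
      have hB2 : (B * B)ᴴ = B * B := by rw [conjTranspose_mul, hB]
      have step4 : ((((A * A) * (B * B)) ^ n).trace).re
          ≤ ((((A * A) ^ n) * ((B * B) ^ n)).trace).re := G _ _ hA2 hB2
      have hfin : ((A * A) ^ n) * ((B * B) ^ n) = A ^ (2 ^ (k + 1)) * B ^ (2 ^ (k + 1)) := by
        rw [hpow, pow_mul', pow_mul', sq, sq]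
      calc (((A * B) ^ (2 ^ (k + 1))).trace).re
          ≤ (((A * B) ^ n * ((A * B)ᴴ) ^ n).trace).re := step1
        _ ≤ ((((A * B) * (A * B)ᴴ) ^ n).trace).re := step2
        _ = ((((A * A) * (B * B)) ^ n).trace).re := by rw [step3]
        _ ≤ ((((A * A) ^ n) * ((B * B) ^ n)).trace).re := step4
        _ = _ := by rw [hfin]
    · intro S
      set n := 2 ^ k with hn
      set X := S * Sᴴ with hX
      set Y := Sᴴ * S with hY
      have hXh : Xᴴ = X := by rw [hX, conjTranspose_mul, conjTranspose_conjTranspose]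
      have hYh : Yᴴ = Y := by rw [hY, conjTranspose_mul, conjTranspose_conjTranspose]
      -- (1): reshape to powers of S²
      have e1 : S ^ (2 ^ (k + 1)) = (S * S) ^ n := by rw [hpow, pow_mul', sq]
      have e2 : Sᴴ ^ (2 ^ (k + 1)) = ((S * S)ᴴ) ^ n := by
        rw [conjTranspose_mul, hpow, pow_mul', sq]
      have step1 : ((S ^ (2 ^ (k + 1)) * Sᴴ ^ (2 ^ (k + 1))).trace).re
          ≤ ((((S * S) * (S * S)ᴴ) ^ n).trace).re := by
        rw [e1, e2]
        exact W (S * S)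
      -- (3): tr ((S² (S²)ᴴ)^n) = tr ((Y X)^n)
      have hSS : (S * S) * (S * S)ᴴ = (S * (X * Sᴴ)) := by
        rw [conjTranspose_mul, hX]
        noncomm_ring
      have step2 : (((S * S) * (S * S)ᴴ) ^ n).trace = ((X * Y) ^ n).trace := by
        rw [hSS, trace_pow_mul_comm _ _ hne]
        congr 1
        congr 1
        rw [hY]
        noncomm_ring
      -- (4): G on X, Y
      have step3 : (((X * Y) ^ n).trace).re ≤ ((X ^ n * Y ^ n).trace).re := G _ _ hXh hYh
      -- (5): Cauchy–Schwarz
      have hYn : (Y ^ n)ᴴ = Y ^ n := by rw [conjTranspose_pow, hYh]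
      have hXn : (X ^ n)ᴴ = X ^ n := by rw [conjTranspose_pow, hXh]
      have step4 : ((X ^ n * Y ^ n).trace).re
          ≤ Real.sqrt (((X ^ n * X ^ n).trace).re) * Real.sqrt (((Y ^ n * Y ^ n).trace).re) :=
        re_trace_mul_le_sqrt _ _ hXn hYn
      -- (6): the two factors agree
      have hYX : ((Y ^ n * Y ^ n).trace) = ((X ^ n * X ^ n).trace) := by
        rw [← pow_add, ← pow_add, hY, hX, trace_pow_mul_comm _ _ (by positivity : n + n ≠ 0)]
      have hXnn : 0 ≤ (((X ^ n * X ^ n)).trace).re := by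
        have := trace_mul_conjTranspose_nonneg (X ^ n)
        rwa [hXn] at this
      have step5 : Real.sqrt (((X ^ n * X ^ n).trace).re) * Real.sqrt (((Y ^ n * Y ^ n).trace).re)
          = ((X ^ n * X ^ n).trace).re := by
        rw [hYX, Real.mul_self_sqrt hXnn]
      have hfin : (X ^ n * X ^ n).trace = (((S * Sᴴ) ^ (2 ^ (k + 1))).trace) := by
        rw [← pow_add, hX]
        congr 1
        rw [hpow]
        ring_nf
      calc ((S ^ (2 ^ (k + 1)) * Sᴴ ^ (2 ^ (k + 1))).trace).re
          ≤ ((((S * S) * (S * S)ᴴ) ^ n).trace).re := step1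
        _ = (((X * Y) ^ n).trace).re := by rw [step2]
        _ ≤ ((X ^ n * Y ^ n).trace).re := step3
        _ ≤ _ := step4
        _ = ((X ^ n * X ^ n).trace).re := step5
        _ = _ := by rw [hfin]


theorem trotter (hd : 0 < d) (X Y : Mat d) :
    Filter.Tendsto (fun k : ℕ =>
      ((NormedSpace.exp (((2 ^ k : ℕ) : ℂ)⁻¹ • X) *
        NormedSpace.exp (((2 ^ k : ℕ) : ℂ)⁻¹ • Y)) ^ (2 ^ k : ℕ) : Mat d))
      Filter.atTop (nhds (NormedSpace.exp (X + Y))) := by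
  haveI : Nonempty (Fin d) := ⟨⟨0, hd⟩⟩
  letI : SeminormedRing (Mat d) := Matrix.linftyOpSemiNormedRing
  letI : NormedRing (Mat d) := Matrix.linftyOpNormedRing
  letI : NormedAlgebra ℂ (Mat d) := Matrix.linftyOpNormedAlgebra
  haveI : NormOneClass (Mat d) := Matrix.linfty_opNormOneClass
  haveI : CompleteSpace (Mat d) := FiniteDimensional.complete ℂ _
  -- norm of powers
  have hpow : ∀ (M : Mat d) (n : ℕ), ‖M ^ n‖ ≤ ‖M‖ ^ n := by
    intro M n
    rcases Nat.eq_zero_or_pos n with rfl | hn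
    · simp
    · exact norm_pow_le' M hn
  -- norm of exp
  have h1 : ∀ Z : Mat d, ‖NormedSpace.exp Z‖ ≤ Real.exp ‖Z‖ := by
    intro Z
    have hs := NormedSpace.exp_series_hasSum_exp' (𝕂 := ℂ) Z
    have hr : HasSum (fun n : ℕ => ‖Z‖ ^ n / n !) (Real.exp ‖Z‖) := by
      rw [Real.exp_eq_exp_ℝ]
      exact NormedSpace.expSeries_div_hasSum_exp ‖Z‖
    refine hs.norm_le_of_bounded hr ?_
    intro n
    rw [norm_smul]
    have hc : ‖((n ! : ℂ)⁻¹ : ℂ)‖ = ((n ! : ℝ))⁻¹ := by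
      rw [norm_inv, Complex.norm_natCast]
    rw [hc, div_eq_inv_mul]
    exact mul_le_mul_of_nonneg_left (hpow Z n) (by positivity)
  -- tail estimate
  have h2 : ∀ Z : Mat d, ‖NormedSpace.exp Z - 1 - Z‖ ≤ ‖Z‖ ^ 2 * Real.exp ‖Z‖ := by
    intro Z
    have hs := NormedSpace.exp_series_hasSum_exp' (𝕂 := ℂ) Z
    have htail : HasSum (fun n : ℕ => (((n + 2)! : ℂ)⁻¹ : ℂ) • Z ^ (n + 2))
        (NormedSpace.exp Z - 1 - Z) := by
      have h := (hasSum_nat_add_iff' (f := fun n : ℕ => ((n ! : ℂ)⁻¹ : ℂ) • Z ^ n) 2).mpr hs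
      simp [Finset.sum_range_succ, sub_sub] at h ⊢
      exact h
    have hg : HasSum (fun n : ℕ => ‖Z‖ ^ 2 * (‖Z‖ ^ n / n !)) (‖Z‖ ^ 2 * Real.exp ‖Z‖) := by
      rw [Real.exp_eq_exp_ℝ]
      exact (NormedSpace.expSeries_div_hasSum_exp ‖Z‖).mul_left _
    refine htail.norm_le_of_bounded hg ?_
    intro n
    rw [norm_smul, norm_inv, Complex.norm_natCast]
    calc ((n + 2)! : ℝ)⁻¹ * ‖Z ^ (n + 2)‖ ≤ (n ! : ℝ)⁻¹ * (‖Z‖ ^ (n + 2)) := by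
          refine mul_le_mul ?_ (hpow _ _) (norm_nonneg _) (by positivity)
          refine inv_anti₀ (by positivity) ?_
          exact_mod_cast Nat.factorial_le (by omega)
      _ = ‖Z‖ ^ 2 * (‖Z‖ ^ n / n !) := by rw [pow_add]; ring
  -- key one-step estimate
  have h3 : ∀ U V : Mat d, ‖NormedSpace.exp U * NormedSpace.exp V -
      NormedSpace.exp (U + V)‖ ≤ 2 * (‖U‖ + ‖V‖) ^ 2 * Real.exp (‖U‖ + ‖V‖) := by
    intro U V
    set u := ‖U‖ with hu
    set v := ‖V‖ with hv
    have hu0 : 0 ≤ u := norm_nonneg _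
    have hv0 : 0 ≤ v := norm_nonneg _
    have hid : NormedSpace.exp U * NormedSpace.exp V - NormedSpace.exp (U + V)
        = (NormedSpace.exp U - 1 - U) * NormedSpace.exp V
          + (1 + U) * (NormedSpace.exp V - 1 - V) + U * V
          - (NormedSpace.exp (U + V) - 1 - (U + V)) := by
      noncomm_ring
    have hb1 : ‖(NormedSpace.exp U - 1 - U) * NormedSpace.exp V‖
        ≤ (u ^ 2 * Real.exp u) * Real.exp v :=
      (norm_mul_le _ _).trans (mul_le_mul (h2 U) (h1 V) (norm_nonneg _) (by positivity))
    have hb2 : ‖(1 + U) * (NormedSpace.exp V - 1 - V)‖ ≤ (1 + u) * (v ^ 2 * Real.exp v) := by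
      refine (norm_mul_le _ _).trans (mul_le_mul ?_ (h2 V) (norm_nonneg _) (by positivity))
      exact (norm_add_le _ _).trans (by rw [norm_one])
    have hb3 : ‖U * V‖ ≤ u * v := norm_mul_le _ _
    have hb4 : ‖NormedSpace.exp (U + V) - 1 - (U + V)‖
        ≤ (u + v) ^ 2 * Real.exp (u + v) := by
      refine (h2 (U + V)).trans ?_
      have hn' : ‖U + V‖ ≤ u + v := norm_add_le _ _
      gcongr <;> exact hn'
    have htot : ‖NormedSpace.exp U * NormedSpace.exp V - NormedSpace.exp (U + V)‖
        ≤ (u ^ 2 * Real.exp u) * Real.exp v + (1 + u) * (v ^ 2 * Real.exp v) + u * v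
          + (u + v) ^ 2 * Real.exp (u + v) := by
      rw [hid]
      refine (norm_sub_le _ _).trans ?_
      refine add_le_add (le_trans (norm_add_le _ _) ?_) hb4
      refine add_le_add (le_trans (norm_add_le _ _) (add_le_add hb1 hb2)) hb3
    refine htot.trans ?_
    have heuv : Real.exp u * Real.exp v = Real.exp (u + v) := (Real.exp_add u v).symm
    have hE1 : (1:ℝ) ≤ Real.exp (u + v) := Real.one_le_exp (by positivity)
    have hexpu : (1 + u) * Real.exp u ≤ Real.exp (u + v) * Real.exp u →  True := fun _ => trivial
    have h1u : (1 + u) ≤ Real.exp u := by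
      have := Real.add_one_le_exp u
      linarith
    have hev1 : Real.exp u ≤ Real.exp (u + v) := Real.exp_le_exp.mpr (by linarith)
    have hev2 : Real.exp v ≤ Real.exp (u + v) := Real.exp_le_exp.mpr (by linarith)
    have he0 : 0 < Real.exp (u+v) := Real.exp_pos _
    have c1 : (u ^ 2 * Real.exp u) * Real.exp v = u ^ 2 * Real.exp (u + v) := by
      rw [mul_assoc, heuv]
    have c2 : (1 + u) * (v ^ 2 * Real.exp v) ≤ v ^ 2 * Real.exp (u + v) := by
      calc (1 + u) * (v ^ 2 * Real.exp v) ≤ Real.exp u * (v ^ 2 * Real.exp v) := by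
            refine mul_le_mul_of_nonneg_right h1u (by positivity)
        _ = v ^ 2 * Real.exp (u + v) := by rw [← heuv]; ring
    have c3 : u * v ≤ u * v * Real.exp (u + v) := le_mul_of_one_le_right (by positivity) hE1
    rw [c1]
    nlinarith [sq_nonneg (u - v), sq_nonneg (u + v), mul_nonneg hu0 hv0]
  -- power difference
  have h4 : ∀ (a b : Mat d) (K : ℝ), 1 ≤ K → ‖a‖ ≤ K → ‖b‖ ≤ K → ∀ n : ℕ,
      ‖a ^ n - b ^ n‖ ≤ n * K ^ n * ‖a - b‖ := by
    intro a b K hK ha hb n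
    have hK0 : (0:ℝ) ≤ K := le_trans zero_le_one hK
    induction n with
    | zero => simp
    | succ n ih =>
      have hid : a ^ (n + 1) - b ^ (n + 1) = a * (a ^ n - b ^ n) + (a - b) * b ^ n := by
        rw [pow_succ' a n, pow_succ' b n]
        noncomm_ring
      push_cast
      have hKn : (0:ℝ) < K ^ n := by positivity
      have hKn1 : (1:ℝ) ≤ K ^ n := one_le_pow₀ hK
      calc ‖a ^ (n + 1) - b ^ (n + 1)‖ ≤ ‖a * (a ^ n - b ^ n)‖ + ‖(a - b) * b ^ n‖ := by
            rw [hid]; exact norm_add_le _ _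
        _ ≤ K * (n * K ^ n * ‖a - b‖) + ‖a - b‖ * K ^ n := by
            refine add_le_add ((norm_mul_le _ _).trans ?_) ((norm_mul_le _ _).trans ?_)
            · exact mul_le_mul ha ih (norm_nonneg _) hK0
            · exact mul_le_mul_of_nonneg_left ((hpow b n).trans
                (pow_le_pow_left₀ (norm_nonneg _) hb n)) (norm_nonneg _)
        _ ≤ (n + 1) * K ^ (n + 1) * ‖a - b‖ := by
            have hab : (0:ℝ) ≤ ‖a - b‖ := norm_nonneg _
            have h5 : ‖a - b‖ * K ^ n ≤ K * K ^ n * ‖a - b‖ := by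
              calc ‖a - b‖ * K ^ n = 1 * K ^ n * ‖a - b‖ := by ring
                _ ≤ K * K ^ n * ‖a - b‖ :=
                    mul_le_mul_of_nonneg_right (mul_le_mul_of_nonneg_right hK hKn.le) hab
            have hps : K ^ (n + 1) = K * K ^ n := pow_succ' K n
            rw [hps]
            push_cast
            nlinarith [h5]
  -- assemble
  set r := ‖X‖ + ‖Y‖ with hr
  have hr0 : 0 ≤ r := by positivity
  have key : ∀ k : ℕ,
      ‖(NormedSpace.exp (((2 ^ k : ℕ) : ℂ)⁻¹ • X) *
        NormedSpace.exp (((2 ^ k : ℕ) : ℂ)⁻¹ • Y)) ^ (2 ^ k : ℕ) -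
        NormedSpace.exp (X + Y)‖ ≤ (2 * r ^ 2 * Real.exp (2 * r)) * ((1 / 2 : ℝ)) ^ k := by
    intro k
    set n : ℕ := 2 ^ k with hn
    have hn0 : (0:ℝ) < (n : ℝ) := by positivity
    have hnne : ((n : ℕ) : ℂ) ≠ 0 := by exact_mod_cast hn0.ne'
    set c : ℂ := ((n : ℕ) : ℂ)⁻¹ with hc
    set U : Mat d := c • X with hU
    set V : Mat d := c • Y with hV
    have hcn : ‖c‖ = (n : ℝ)⁻¹ := by rw [hc, norm_inv, Complex.norm_natCast]
    have hUn : ‖U‖ = ‖X‖ / n := by rw [hU, norm_smul, hcn]; ring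
    have hVn : ‖V‖ = ‖Y‖ / n := by rw [hV, norm_smul, hcn]; ring
    have hs : ‖U‖ + ‖V‖ = r / n := by rw [hUn, hVn, hr]; ring
    have hsr : r / n ≤ r := by
      refine div_le_self hr0 ?_
      exact_mod_cast Nat.one_le_two_pow
    have hs0 : 0 ≤ r / n := by positivity
    -- b ^ n = exp (X + Y)
    have hb : (NormedSpace.exp (U + V)) ^ n = NormedSpace.exp (X + Y) := by
      refine (Matrix.exp_nsmul n (U + V)).symm.trans ?_
      congr 1
      rw [hU, hV, ← smul_add, ← Nat.cast_smul_eq_nsmul ℂ, smul_smul, hc,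
        mul_inv_cancel₀ hnne, one_smul]
    set K : ℝ := Real.exp (r / n) with hK
    have hK1 : 1 ≤ K := Real.one_le_exp hs0
    have haK : ‖NormedSpace.exp U * NormedSpace.exp V‖ ≤ K := by
      refine (norm_mul_le _ _).trans ?_
      calc ‖NormedSpace.exp U‖ * ‖NormedSpace.exp V‖
          ≤ Real.exp ‖U‖ * Real.exp ‖V‖ :=
            mul_le_mul (h1 U) (h1 V) (norm_nonneg _) (Real.exp_pos _).le
        _ = K := by rw [← Real.exp_add, hs]
    have hbK : ‖NormedSpace.exp (U + V)‖ ≤ K := by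
      refine (h1 _).trans ?_
      rw [hK]
      exact Real.exp_le_exp.mpr ((norm_add_le _ _).trans_eq hs)
    have hKn : K ^ n = Real.exp r := by
      rw [hK, ← Real.exp_nat_mul]
      congr 1
      field_simp
    have hab : ‖NormedSpace.exp U * NormedSpace.exp V - NormedSpace.exp (U + V)‖
        ≤ 2 * (r / n) ^ 2 * Real.exp r := by
      refine (h3 U V).trans ?_
      rw [hs]
      have := Real.exp_le_exp.mpr hsr
      gcongr
    have hhalf : ((1 / 2 : ℝ)) ^ k = (n : ℝ)⁻¹ := by
      rw [hn]; push_cast; rw [div_pow, one_pow, one_div]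
    have main := h4 (NormedSpace.exp U * NormedSpace.exp V) (NormedSpace.exp (U + V))
      K hK1 haK hbK n
    rw [hb] at main
    refine main.trans ?_
    rw [hKn, hhalf]
    refine le_trans (mul_le_mul_of_nonneg_left hab (by positivity)) (le_of_eq ?_)
    have hexp2r : Real.exp r * Real.exp r = Real.exp (2 * r) := by
      rw [← Real.exp_add]; ring_nf
    have : (n : ℝ) * Real.exp r * (2 * (r / n) ^ 2 * Real.exp r)
        = (2 * r ^ 2 * (Real.exp r * Real.exp r)) * (n:ℝ)⁻¹ := by
      field_simp
    calc (n : ℝ) * Real.exp r * (2 * (r / ↑n) ^ 2 * Real.exp r)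
        = (2 * r ^ 2 * (Real.exp r * Real.exp r)) * (n:ℝ)⁻¹ := this
      _ = (2 * r ^ 2 * Real.exp (2 * r)) * (n:ℝ)⁻¹ := by rw [hexp2r]
  -- conclude
  refine tendsto_iff_norm_sub_tendsto_zero.mpr ?_
  refine squeeze_zero (fun k => norm_nonneg _) key ?_
  have hlim : Tendsto (fun k : ℕ => ((1 / 2 : ℝ)) ^ k) atTop (nhds 0) :=
    tendsto_pow_atTop_nhds_zero_of_lt_one (by norm_num) (by norm_num)
  simpa using hlim.const_mul (2 * r ^ 2 * Real.exp (2 * r))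

end GT

open GT

/-- Golden–Thompson inequality. -/
theorem golden_thompson {d : ℕ} (X Y : Matrix (Fin d) (Fin d) ℂ)
    (hX : X.IsHermitian) (hY : Y.IsHermitian) :
    ((NormedSpace.exp (X + Y)).trace).re
      ≤ ((NormedSpace.exp X * NormedSpace.exp Y).trace).re := by
  rcases Nat.eq_zero_or_pos d with rfl | hd
  · simp [Matrix.trace]
  letI : SeminormedRing (Mat d) := Matrix.linftyOpSemiNormedRing
  letI : NormedRing (Mat d) := Matrix.linftyOpNormedRing
  letI : NormedAlgebra ℂ (Mat d) := Matrix.linftyOpNormedAlgebra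
  have cont : Continuous fun M : Mat d => (M.trace).re := by
    have h1 : Continuous fun M : Mat d => M.trace :=
      LinearMap.continuous_of_finiteDimensional
        (Matrix.traceLinearMap (Fin d) ℂ ℂ)
    exact Complex.continuous_re.comp h1
  have trot := trotter hd X Y
  have tend := (cont.tendsto _).comp trot
  refine le_of_tendsto tend (Filter.Eventually.of_forall fun k => ?_)
  show (((NormedSpace.exp (((2 ^ k : ℕ) : ℂ)⁻¹ • X) *
      NormedSpace.exp (((2 ^ k : ℕ) : ℂ)⁻¹ • Y)) ^ (2 ^ k : ℕ)).trace).re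
      ≤ ((NormedSpace.exp X * NormedSpace.exp Y).trace).re
  set n : ℕ := 2 ^ k with hn
  have hnne : ((n : ℕ) : ℂ) ≠ 0 := Nat.cast_ne_zero.mpr (by positivity)
  set c : ℂ := ((n : ℕ) : ℂ)⁻¹ with hc
  have hstar : star c = c := by
    rw [hc]
    simp
  have hXc : (c • X)ᴴ = c • X := by
    rw [Matrix.conjTranspose_smul, hstar, hX.eq]
  have hYc : (c • Y)ᴴ = c • Y := by
    rw [Matrix.conjTranspose_smul, hstar, hY.eq]
  have hA : (NormedSpace.exp (c • X))ᴴ = NormedSpace.exp (c • X) := by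
    rw [← Matrix.exp_conjTranspose, hXc]
  have hB : (NormedSpace.exp (c • Y))ᴴ = NormedSpace.exp (c • Y) := by
    rw [← Matrix.exp_conjTranspose, hYc]
  have hApow : (NormedSpace.exp (c • X)) ^ n = NormedSpace.exp X := by
    rw [← Matrix.exp_nsmul, ← Nat.cast_smul_eq_nsmul ℂ, smul_smul, hc,
      mul_inv_cancel₀ hnne, one_smul]
  have hBpow : (NormedSpace.exp (c • Y)) ^ n = NormedSpace.exp Y := by
    rw [← Matrix.exp_nsmul, ← Nat.cast_smul_eq_nsmul ℂ, smul_smul, hc,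
      mul_inv_cancel₀ hnne, one_smul]
  have := (GW (d := d) k).1 (NormedSpace.exp (c • X)) (NormedSpace.exp (c • Y)) hA hB
  rw [← hn] at this
  rwa [hApow, hBpow] at this

end GoldenThompsonProof
end

section
/- Entropy maximization Lagrangian: for Hermitian K on a d-dimensional space, inf over positive definite γ of tr[γ log γ] + tr[γ K] equals −tr[exp(−K − 1)], attained at γ = exp(−K − 1). -/
open Matrix
open scoped ComplexOrder

namespace EntropyMaxAux

variable {d : ℕ}

private lemma klein_scalar {x t : ℝ} (hx : 0 < x) :
    0 ≤ x * Real.log x - x * t - x + Real.exp t := by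
  have h1 := Real.add_one_le_exp (t - Real.log x)
  have h2 : x * ((t - Real.log x) + 1) ≤ x * Real.exp (t - Real.log x) :=
    mul_le_mul_of_nonneg_left h1 hx.le
  have h3 : x * Real.exp (t - Real.log x) = Real.exp t := by
    rw [Real.exp_sub, Real.exp_log hx]
    field_simp
  nlinarith [h2, h3]

/-- exp is the cfc of Real.exp on Hermitian matrices. -/
lemma mexp_eq_cfc {A : Matrix (Fin d) (Fin d) ℂ} (hA : A.IsHermitian) :
    mexp A = cfc Real.exp A := by
  letI := Matrix.instL2OpNormedRing (n := Fin d) (𝕜 := ℂ)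
  letI := Matrix.instL2OpNormedAlgebra (n := Fin d) (𝕜 := ℂ)
  letI : NormedAlgebra ℝ (Matrix (Fin d) (Fin d) ℂ) := NormedAlgebra.restrictScalars ℝ ℂ _
  rw [mexp, CFC.real_exp_eq_normedSpace_exp (a := A) hA]

lemma mlog_mexp {A : Matrix (Fin d) (Fin d) ℂ} (hA : A.IsHermitian) :
    mlog (mexp A) = A := by
  have hA' : IsSelfAdjoint A := hA
  have hcont : ContinuousOn Real.log (Real.exp '' spectrum ℝ A) := by
    fun_prop (disch := aesop)
  rw [mlog, mexp_eq_cfc hA, ← cfc_comp' Real.log Real.exp A hcont]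
  simpa using cfc_id' (R := ℝ) A

lemma cfc_spectral {A : Matrix (Fin d) (Fin d) ℂ} (hA : A.IsHermitian) (f : ℝ → ℝ) :
    cfc f A = (Matrix.IsHermitian.eigenvectorUnitary hA : Matrix (Fin d) (Fin d) ℂ)
      * diagonal (RCLike.ofReal ∘ f ∘ hA.eigenvalues)
      * star (Matrix.IsHermitian.eigenvectorUnitary hA : Matrix (Fin d) (Fin d) ℂ) :=
  (hA.cfc_eq f).trans rfl

lemma posDef_conj {U : Matrix (Fin d) (Fin d) ℂ} (hU : U ∈ Matrix.unitaryGroup (Fin d) ℂ)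
    {D : Matrix (Fin d) (Fin d) ℂ} (hD : D.PosDef) : (U * D * star U).PosDef := by
  have h2 : U * star U = 1 := Matrix.mem_unitaryGroup_iff.mp hU
  refine Matrix.PosDef.of_dotProduct_mulVec_pos ?_ ?_
  · rw [Matrix.star_eq_conjTranspose]
    exact Matrix.isHermitian_mul_mul_conjTranspose U hD.1
  · intro x hx
    have hx' : star U *ᵥ x ≠ 0 := by
      intro h
      apply hx
      have := congrArg (fun v => U *ᵥ v) h
      simpa [Matrix.mulVec_mulVec, h2] using this
    have key := hD.dotProduct_mulVec_pos hx'
    have hrw : U * D * star U = (star U)ᴴ * D * (star U) := by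
      rw [Matrix.star_eq_conjTranspose, Matrix.conjTranspose_conjTranspose]
    rw [hrw]
    simpa only [Matrix.star_mulVec, Matrix.dotProduct_mulVec, Matrix.vecMul_vecMul] using key

lemma trace_conj {U : Matrix (Fin d) (Fin d) ℂ} (hU : U ∈ Matrix.unitaryGroup (Fin d) ℂ)
    (D : Matrix (Fin d) (Fin d) ℂ) : (U * D * star U).trace = D.trace := by
  rw [Matrix.trace_mul_comm, ← Matrix.mul_assoc, Matrix.mem_unitaryGroup_iff'.mp hU,
    Matrix.one_mul]

lemma trace_dWdW (W : Matrix (Fin d) (Fin d) ℂ) (a b : Fin d → ℂ) :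
    (diagonal a * W * diagonal b * star W).trace
      = ∑ i, ∑ j, a i * b j * (W i j * star (W i j)) := by
  rw [Matrix.trace]
  simp only [Matrix.diag_apply, Matrix.mul_apply, Matrix.star_eq_conjTranspose,
    Matrix.conjTranspose_apply, Matrix.diagonal_apply, Finset.sum_mul, Finset.mul_sum]
  refine Finset.sum_congr rfl fun i _ => ?_
  refine Finset.sum_congr rfl fun j _ => ?_
  simp
  ring

lemma trace_pair {U V : Matrix (Fin d) (Fin d) ℂ}
    (hU : U ∈ Matrix.unitaryGroup (Fin d) ℂ) (hV : V ∈ Matrix.unitaryGroup (Fin d) ℂ)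
    (a b : Fin d → ℂ) :
    ((U * diagonal a * star U) * (V * diagonal b * star V)).trace
      = ∑ i, ∑ j, a i * b j * ((star U * V) i j * star ((star U * V) i j)) := by
  set W := star U * V with hW
  have hsW : star V * U = star W := by rw [hW, StarMul.star_mul, star_star]
  have e1 : (U * diagonal a * star U) * (V * diagonal b * star V)
      = U * (diagonal a * W * diagonal b * star V) := by
    simp only [hW, Matrix.mul_assoc]
  rw [e1, Matrix.trace_mul_comm, Matrix.mul_assoc, Matrix.mul_assoc, Matrix.mul_assoc, hsW,
    ← Matrix.mul_assoc, ← Matrix.mul_assoc]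
  exact trace_dWdW W a b

end EntropyMaxAux

open EntropyMaxAux in
/-- Entropy maximization: `inf_{γ>0} tr[γ log γ] + tr[γ K] = −tr[exp(−K−1)]`,
attained at `γ = exp(−K−1)`. -/
theorem entropy_maximization_lagrangian {d : ℕ}
    (K : Matrix (Fin d) (Fin d) ℂ) (hK : K.IsHermitian) :
    (⨅ γ : {γ : Matrix (Fin d) (Fin d) ℂ // γ.PosDef},
        ((γ.1 * mlog γ.1).trace.re + (γ.1 * K).trace.re))
      = -((mexp (-K - 1)).trace.re)
    ∧ ((mexp (-K - 1) * mlog (mexp (-K - 1))).trace.re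
        + (mexp (-K - 1) * K).trace.re
        = -((mexp (-K - 1)).trace.re)) := by
  set A : Matrix (Fin d) (Fin d) ℂ := -K - 1 with hAdef
  have hA : A.IsHermitian := hK.neg.sub Matrix.isHermitian_one
  set γ₀ : Matrix (Fin d) (Fin d) ℂ := mexp A with hγ₀def
  set U : Matrix (Fin d) (Fin d) ℂ :=
    (Matrix.IsHermitian.eigenvectorUnitary hA : Matrix (Fin d) (Fin d) ℂ) with hUdef
  have hUmem : U ∈ Matrix.unitaryGroup (Fin d) ℂ := (Matrix.IsHermitian.eigenvectorUnitary hA).2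
  set lam : Fin d → ℝ := hA.eigenvalues with hlamdef
  have hAspec : A = U * diagonal (RCLike.ofReal ∘ lam) * star U := hA.spectral_theorem
  have hγ₀spec : γ₀ = U * diagonal (RCLike.ofReal ∘ Real.exp ∘ lam) * star U := by
    rw [hγ₀def, mexp_eq_cfc hA, cfc_spectral hA]
  have hγ₀PD : γ₀.PosDef := by
    rw [hγ₀spec]
    refine posDef_conj hUmem (Matrix.PosDef.diagonal fun i => ?_)
    simpa using Complex.zero_lt_real.mpr (Real.exp_pos (lam i))
  have hlog₀ : mlog γ₀ = A := mlog_mexp hA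
  have htr₀ : γ₀.trace = ((∑ j, Real.exp (lam j) : ℝ) : ℂ) := by
    rw [hγ₀spec, trace_conj hUmem, Matrix.trace_diagonal, Complex.ofReal_sum]
    rfl
  -- Part 2 : attainment
  have part2 : (γ₀ * mlog γ₀).trace.re + (γ₀ * K).trace.re = -(γ₀.trace.re) := by
    have hsum : (γ₀ * mlog γ₀).trace + (γ₀ * K).trace = -(γ₀.trace) := by
      rw [hlog₀, ← Matrix.trace_add, ← Matrix.mul_add]
      have : A + K = -1 := by rw [hAdef]; abel
      rw [this, Matrix.mul_neg, Matrix.mul_one, Matrix.trace_neg]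
    have := congrArg Complex.re hsum
    simpa [Complex.add_re, Complex.neg_re] using this
  -- Klein lower bound
  have klein : ∀ γ : {γ : Matrix (Fin d) (Fin d) ℂ // γ.PosDef},
      -(γ₀.trace.re) ≤ (γ.1 * mlog γ.1).trace.re + (γ.1 * K).trace.re := by
    rintro ⟨γ, hγ⟩
    dsimp only
    set V : Matrix (Fin d) (Fin d) ℂ :=
      (Matrix.IsHermitian.eigenvectorUnitary hγ.1 : Matrix (Fin d) (Fin d) ℂ) with hVdef
    have hVmem : V ∈ Matrix.unitaryGroup (Fin d) ℂ :=
      (Matrix.IsHermitian.eigenvectorUnitary hγ.1).2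
    have hVsV : star V * V = 1 := Matrix.mem_unitaryGroup_iff'.mp hVmem
    set x : Fin d → ℝ := hγ.1.eigenvalues with hxdef
    have hxpos : ∀ i, 0 < x i := hγ.eigenvalues_pos
    have hγspec : γ = V * diagonal (RCLike.ofReal ∘ x) * star V := hγ.1.spectral_theorem
    have hγlog : mlog γ = V * diagonal (RCLike.ofReal ∘ Real.log ∘ x) * star V :=
      cfc_spectral hγ.1 Real.log
    set W : Matrix (Fin d) (Fin d) ℂ := star V * U with hWdef
    have hpnn : ∀ i j, (0:ℝ) ≤ Complex.normSq (W i j) := fun i j => Complex.normSq_nonneg _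
    have hWW : W * star W = 1 := by
      rw [hWdef, StarMul.star_mul, star_star, Matrix.mul_assoc, ← Matrix.mul_assoc U,
        Matrix.mem_unitaryGroup_iff.mp hUmem, Matrix.one_mul, hVsV]
    have hWW' : star W * W = 1 := by
      rw [hWdef, StarMul.star_mul, star_star, Matrix.mul_assoc, ← Matrix.mul_assoc V,
        Matrix.mem_unitaryGroup_iff.mp hVmem, Matrix.one_mul,
        Matrix.mem_unitaryGroup_iff'.mp hUmem]
    have hrow : ∀ i, ∑ j, Complex.normSq (W i j) = 1 := by
      intro i
      have h := congrFun (congrFun hWW i) i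
      rw [Matrix.mul_apply] at h
      have h2 : ∑ j, ((Complex.normSq (W i j) : ℝ) : ℂ) = 1 := by
        rw [show ((1:ℂ)) = (1 : Matrix (Fin d) (Fin d) ℂ) i i by simp, ← h]
        refine Finset.sum_congr rfl fun j _ => ?_
        simp [Matrix.star_eq_conjTranspose, Matrix.conjTranspose_apply, Complex.mul_conj]
      exact_mod_cast h2
    have hcol : ∀ j, ∑ i, Complex.normSq (W i j) = 1 := by
      intro j
      have h := congrFun (congrFun hWW' j) j
      rw [Matrix.mul_apply] at h
      have h2 : ∑ i, ((Complex.normSq (W i j) : ℝ) : ℂ) = 1 := by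
        rw [show ((1:ℂ)) = (1 : Matrix (Fin d) (Fin d) ℂ) j j by simp, ← h]
        refine Finset.sum_congr rfl fun i _ => ?_
        simp [Matrix.star_eq_conjTranspose, Matrix.conjTranspose_apply, Complex.mul_conj,
          mul_comm]
      exact_mod_cast h2
    -- trace of γ * mlog γ
    have h1 : (γ * mlog γ).trace = ((∑ i, x i * Real.log (x i) : ℝ) : ℂ) := by
      have : γ * mlog γ = V * (diagonal (RCLike.ofReal ∘ x)
          * diagonal (RCLike.ofReal ∘ Real.log ∘ x)) * star V := by
        rw [hγlog, hγspec]
        simp only [Matrix.mul_assoc]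
        rw [← Matrix.mul_assoc (star V) V, hVsV, Matrix.one_mul]
      rw [this, trace_conj hVmem, Matrix.diagonal_mul_diagonal, Matrix.trace_diagonal,
        Complex.ofReal_sum]
      refine Finset.sum_congr rfl fun i _ => ?_
      simp [Complex.ofReal_mul]
    -- trace of γ
    have h4 : γ.trace = ((∑ i, x i : ℝ) : ℂ) := by
      rw [hγspec, trace_conj hVmem, Matrix.trace_diagonal, Complex.ofReal_sum]
      rfl
    -- trace of γ * A
    have h2 : (γ * A).trace = ((∑ i, ∑ j, x i * lam j * Complex.normSq (W i j) : ℝ) : ℂ) := by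
      rw [hγspec, hAspec, trace_pair hVmem hUmem, ← hWdef]
      push_cast
      refine Finset.sum_congr rfl fun i _ => Finset.sum_congr rfl fun j _ => ?_
      simp only [Function.comp_apply]
      rw [show star (W i j) = starRingEnd ℂ (W i j) from rfl, Complex.mul_conj]
      norm_cast
      exact (Complex.ofReal_mul _ _).symm
    -- trace of γ * K
    have h3 : (γ * K).trace = -(γ * A).trace - γ.trace := by
      have : γ * K = -(γ * A) - γ := by
        have hKA : K = -A - 1 := by rw [hAdef]; abel
        rw [hKA, Matrix.mul_sub, Matrix.mul_neg, Matrix.mul_one]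
      rw [this, Matrix.trace_sub, Matrix.trace_neg]
    -- put it together
    have hobj : (γ * mlog γ).trace.re + (γ * K).trace.re
        = (∑ i, x i * Real.log (x i)) - (∑ i, ∑ j, x i * lam j * Complex.normSq (W i j)) - (∑ i, x i) := by
      rw [h3]
      have e1 : (γ * mlog γ).trace.re = ∑ i, x i * Real.log (x i) := by
        rw [h1, Complex.ofReal_re]
      have e2 : (γ * A).trace.re = ∑ i, ∑ j, x i * lam j * Complex.normSq (W i j) := by
        rw [h2, Complex.ofReal_re]
      have e4 : γ.trace.re = ∑ i, x i := by rw [h4, Complex.ofReal_re]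
      rw [Complex.sub_re, Complex.neg_re, e1, e2, e4]
      ring
    rw [hobj, htr₀, Complex.ofReal_re]
    -- now a purely real inequality
    have key : 0 ≤ (∑ i, x i * Real.log (x i)) - (∑ i, ∑ j, x i * lam j * Complex.normSq (W i j))
        - (∑ i, x i) + (∑ j, Real.exp (lam j)) := by
      have e1 : (∑ i, x i * Real.log (x i)) = ∑ i, ∑ j, Complex.normSq (W i j) * (x i * Real.log (x i)) := by
        refine Finset.sum_congr rfl fun i _ => ?_
        rw [← Finset.sum_mul, hrow i, one_mul]
      have e2 : (∑ i, x i) = ∑ i, ∑ j, Complex.normSq (W i j) * x i := by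
        refine Finset.sum_congr rfl fun i _ => ?_
        rw [← Finset.sum_mul, hrow i, one_mul]
      have e3 : (∑ j, Real.exp (lam j)) = ∑ i, ∑ j, Complex.normSq (W i j) * Real.exp (lam j) := by
        rw [Finset.sum_comm]
        refine Finset.sum_congr rfl fun j _ => ?_
        rw [← Finset.sum_mul, hcol j, one_mul]
      have e4 : (∑ i, ∑ j, x i * lam j * Complex.normSq (W i j)) = ∑ i, ∑ j, Complex.normSq (W i j) * (x i * lam j) := by
        refine Finset.sum_congr rfl fun i _ => Finset.sum_congr rfl fun j _ => by ring
      rw [e1, e2, e3, e4, ← Finset.sum_sub_distrib, ← Finset.sum_sub_distrib,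
        ← Finset.sum_add_distrib]
      refine Finset.sum_nonneg fun i _ => ?_
      rw [← Finset.sum_sub_distrib, ← Finset.sum_sub_distrib, ← Finset.sum_add_distrib]
      refine Finset.sum_nonneg fun j _ => ?_
      have := klein_scalar (x := x i) (t := lam j) (hxpos i)
      nlinarith [hpnn i j, this]
    linarith
  -- conclude
  have hne : Nonempty {γ : Matrix (Fin d) (Fin d) ℂ // γ.PosDef} := ⟨⟨γ₀, hγ₀PD⟩⟩
  constructor
  · refine le_antisymm ?_ (le_ciInf klein)
    have hbdd : BddBelow (Set.range fun γ : {γ : Matrix (Fin d) (Fin d) ℂ // γ.PosDef} =>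
        ((γ.1 * mlog γ.1).trace.re + (γ.1 * K).trace.re)) := by
      refine ⟨-(γ₀.trace.re), ?_⟩
      rintro _ ⟨γ, rfl⟩
      exact klein γ
    have := ciInf_le hbdd (⟨γ₀, hγ₀PD⟩ : {γ : Matrix (Fin d) (Fin d) ℂ // γ.PosDef})
    calc (⨅ γ : {γ : Matrix (Fin d) (Fin d) ℂ // γ.PosDef},
        ((γ.1 * mlog γ.1).trace.re + (γ.1 * K).trace.re))
        ≤ (γ₀ * mlog γ₀).trace.re + (γ₀ * K).trace.re := this
      _ = -(γ₀.trace.re) := part2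
  · exact part2
end
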